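/- arXiv:2505.19520 — 5 statements merged into one kernel-verified Lean document; each statement's English description precedes it below -/
import Mathlib

section
/- Let D ⊆ L(A) be a peak-pit Condorcet domain on a finite set A of alternatives, let R, T ∈ D, and let B ⊆ A be a subset with |B| ≥ 3. Then there exists a geodesic 𝒜 connecting R_B and T_B such that D_B ∪ K(𝒜) is a peak-pit Condorcet domain. -/
/-!
Common definitions for formalizing Condorcet domains.

A linear order on a finite set `A : Finset α` of alternatives is encoded as a
duplicate-free list enumerating the elements of `A` from most preferred (head)
to least preferred (last).
-/

variable {α : Type*}

/-- `l` is a linear order on the finite set `A` of alternatives. -/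
def IsLinOrd [DecidableEq α] (A : Finset α) (l : List α) : Prop :=
  l.Nodup ∧ l.toFinset = A

/-- The restriction of a linear order `l` to the subset `S` of alternatives. -/
def restrictOrd [DecidableEq α] (l : List α) (S : Finset α) : List α :=
  l.filter (fun x => decide (x ∈ S))

/-- The restriction of a domain `D` to the subset `S` of alternatives. -/
def restrictDom [DecidableEq α] (D : Set (List α)) (S : Finset α) : Set (List α) :=
  (fun l => restrictOrd l S) '' D

/-- The never-condition `x N (k+1)`: no linear order in `E` ranks `x` in
position `k+1` (positions are counted from `1`, so `k : Fin 3` is the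
zero-based index).  `k = 0` is a never-top condition, `k = 2` a never-bottom
condition. -/
def NeverCond (E : Set (List α)) (x : α) (k : Fin 3) : Prop :=
  ∀ l ∈ E, l[(k : ℕ)]? ≠ some x

/-- The set of never-conditions (encoded as pairs `(x, k)`) satisfied by a
domain `E` on the triple `T`. -/
def NeverConds (T : Finset α) (E : Set (List α)) : Set (α × Fin 3) :=
  {p | p.1 ∈ T ∧ NeverCond E p.1 p.2}

/-- The set of peak-pit conditions (never-top or never-bottom conditions)
satisfied by a domain `E` on the triple `T`. -/
def PeakPitConds (T : Finset α) (E : Set (List α)) : Set (α × Fin 3) :=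
  {p | p.1 ∈ T ∧ (p.2 = 0 ∨ p.2 = 2) ∧ NeverCond E p.1 p.2}

/-- `D` is a Condorcet domain on `A`: a set of linear orders on `A` whose
restriction to every triple of distinct alternatives satisfies some
never-condition. -/
def IsCondorcetDomain [DecidableEq α] (A : Finset α) (D : Set (List α)) : Prop :=
  (∀ l ∈ D, IsLinOrd A l) ∧
    ∀ a b c : α, a ∈ A → b ∈ A → c ∈ A → a ≠ b → a ≠ c → b ≠ c →
      ∃ x ∈ ({a, b, c} : Finset α), ∃ k : Fin 3,
        NeverCond (restrictDom D {a, b, c}) x k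

/-- `D` is a peak-pit Condorcet domain on `A`: a set of linear orders on `A`
whose restriction to every triple of distinct alternatives satisfies a
never-top or a never-bottom condition. -/
def IsPeakPitDomain [DecidableEq α] (A : Finset α) (D : Set (List α)) : Prop :=
  (∀ l ∈ D, IsLinOrd A l) ∧
    ∀ a b c : α, a ∈ A → b ∈ A → c ∈ A → a ≠ b → a ≠ c → b ≠ c →
      ∃ x ∈ ({a, b, c} : Finset α),
        NeverCond (restrictDom D {a, b, c}) x 0 ∨
          NeverCond (restrictDom D {a, b, c}) x 2

/-- Two linear orders are alike if they differ by a swap of two adjacent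
alternatives. -/
def Alike (R T : List α) : Prop :=
  ∃ (l₁ l₂ : List α) (x y : α), x ≠ y ∧
    R = l₁ ++ x :: y :: l₂ ∧ T = l₁ ++ y :: x :: l₂

/-- `P` is a path of alike linear orders on `L(A)`. -/
def IsPathOn [DecidableEq α] (A : Finset α) (P : List (List α)) : Prop :=
  P ≠ [] ∧ (∀ l ∈ P, IsLinOrd A l) ∧ P.Chain' Alike

/-- `P` is a path of alike linear orders on `L(A)` connecting `R` and `T`. -/
def IsPath [DecidableEq α] (A : Finset α) (P : List (List α)) (R T : List α) : Prop :=
  IsPathOn A P ∧ P.head? = some R ∧ P.getLast? = some T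

/-- `P` is a geodesic on `L(A)` connecting `R` and `T`: a path of alike linear
orders of minimal length among all such paths. -/
def IsGeodesic [DecidableEq α] (A : Finset α) (P : List (List α)) (R T : List α) : Prop :=
  IsPath A P R T ∧ ∀ Q : List (List α), IsPath A Q R T → P.length ≤ Q.length

/-- The switching pair of alternatives between two alike linear orders (as an
unordered pair); `none` if the two lists do not differ. -/
def switchPair? [DecidableEq α] (R T : List α) : Option (Sym2 α) :=
  ((R.zip T).find? (fun p => decide (p.1 ≠ p.2))).map Sym2.mk.uncurry

/-- `S(P)`: the sequence of switching pairs of a path of alike linear orders. -/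
def switchSeq [DecidableEq α] (P : List (List α)) : List (Sym2 α) :=
  (P.zip P.tail).filterMap (fun p => switchPair? p.1 p.2)

/-- The restriction of a path to the subset `B`: restrict every member and
remove consecutive duplicates. -/
def restrictPath [DecidableEq α] (P : List (List α)) (B : Finset α) : List (List α) :=
  (P.map (fun l => restrictOrd l B)).destutter (· ≠ ·)

/-- `D` is connected: any two of its members are joined by a path of alike
linear orders lying entirely in `D`. -/
def ConnectedDomain [DecidableEq α] (A : Finset α) (D : Set (List α)) : Prop :=
  ∀ R ∈ D, ∀ T ∈ D, ∃ P : List (List α), IsPath A P R T ∧ ∀ l ∈ P, l ∈ D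

/-- `D` is directly connected: any two of its members are joined by a geodesic
lying entirely in `D`. -/
def DirectlyConnectedDomain [DecidableEq α] (A : Finset α) (D : Set (List α)) : Prop :=
  ∀ R ∈ D, ∀ T ∈ D, ∃ P : List (List α), IsGeodesic A P R T ∧ ∀ l ∈ P, l ∈ D

/-- Two unordered pairs of alternatives are disjoint. -/
def DisjointPair (p q : Sym2 α) : Prop := ∀ x : α, x ∈ p → x ∉ q

/-- One swap of an adjacent disjoint pair of switching pairs in a sequence of
switching pairs. -/
inductive AdjSwap : List (Sym2 α) → List (Sym2 α) → Prop
  | swap (l₁ l₂ : List (Sym2 α)) (p q : Sym2 α) (h : DisjointPair p q) :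
      AdjSwap (l₁ ++ p :: q :: l₂) (l₁ ++ q :: p :: l₂)

/-- Two paths are equivalent if their sequences of switching pairs differ by a
finite number of swaps of adjacent disjoint pairs of switching pairs. -/
def PathEquiv [DecidableEq α] (P Q : List (List α)) : Prop :=
  Relation.ReflTransGen AdjSwap (switchSeq P) (switchSeq Q)

/-- Two domains are isomorphic if some bijection between the underlying sets of
alternatives maps one domain onto the other (acting position-wise on linear
orders). -/
def DomIsomorphic (A B : Finset α) (D E : Set (List α)) : Prop :=
  ∃ f : α → α, Set.BijOn f ↑A ↑B ∧ E = (fun l => l.map f) '' D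


set_option linter.unusedSectionVars false

namespace CDaux
variable {α : Type*} [DecidableEq α]

/-- `x` appears (strictly) above `y` in the list `X`. -/
abbrev Ab (X : List α) (x y : α) : Prop := List.Sublist [x, y] X

lemma Ab.mem₁ {X : List α} {x y : α} (h : Ab X x y) : x ∈ X :=
  h.subset (by simp)

lemma Ab.mem₂ {X : List α} {x y : α} (h : Ab X x y) : y ∈ X :=
  h.subset (by simp)

lemma Ab.ne {X : List α} (hX : X.Nodup) {x y : α} (h : Ab X x y) : x ≠ y := by
  rintro rfl
  exact (List.nodup_iff_sublist.mp hX x) h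

lemma ab_total {X : List α} {x y : α} (hx : x ∈ X) (hy : y ∈ X) (hxy : x ≠ y) :
    Ab X x y ∨ Ab X y x := by
  induction X with
  | nil => simp at hx
  | cons a X ih =>
    rcases List.mem_cons.mp hx with rfl | hx'
    · have hy' : y ∈ X := by
        rcases List.mem_cons.mp hy with rfl | h
        · exact absurd rfl hxy
        · exact h
      exact Or.inl (List.cons_sublist_cons.mpr (List.singleton_sublist.mpr hy'))
    · rcases List.mem_cons.mp hy with rfl | hy'
      · exact Or.inr (List.cons_sublist_cons.mpr (List.singleton_sublist.mpr hx'))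
      · rcases ih hx' hy' with h | h
        · exact Or.inl (h.trans (List.sublist_cons_self a X))
        · exact Or.inr (h.trans (List.sublist_cons_self a X))

lemma ab_asymm {X : List α} (hX : X.Nodup) {x y : α}
    (h1 : Ab X x y) (h2 : Ab X y x) : False := by
  induction X with
  | nil => simp at h1
  | cons a X ih =>
    have hX' : X.Nodup := hX.of_cons
    have haX : a ∉ X := (List.nodup_cons.mp hX).1
    have hxy : x ≠ y := Ab.ne hX h1
    rcases List.sublist_cons_iff.mp h1 with h1' | ⟨r, hr, hr'⟩
    · rcases List.sublist_cons_iff.mp h2 with h2' | ⟨r2, hr2, hr2'⟩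
      · exact ih hX' h1' h2'
      · injection hr2 with h h'
        subst h
        exact haX (Ab.mem₂ h1')
    · injection hr with h h'
      subst h
      rcases List.sublist_cons_iff.mp h2 with h2' | ⟨r2, hr2, hr2'⟩
      · exact haX (Ab.mem₂ h2')
      · injection hr2 with h h''
        exact hxy h.symm

lemma ab_trans {X : List α} (hX : X.Nodup) {x y z : α}
    (h1 : Ab X x y) (h2 : Ab X y z) : Ab X x z := by
  induction X with
  | nil => simp at h1
  | cons a X ih =>
    have hX' : X.Nodup := hX.of_cons
    have haX : a ∉ X := (List.nodup_cons.mp hX).1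
    rcases List.sublist_cons_iff.mp h1 with h1' | ⟨r, hr, hr'⟩
    · rcases List.sublist_cons_iff.mp h2 with h2' | ⟨r2, hr2, hr2'⟩
      · exact (ih hX' h1' h2').trans (List.sublist_cons_self a X)
      · injection hr2 with h h'
        subst h
        exact absurd (Ab.mem₂ h1') haX
    · injection hr with h h'
      subst h
      subst h'
      have hyX : y ∈ X := List.singleton_sublist.mp hr'
      rcases List.sublist_cons_iff.mp h2 with h2' | ⟨r2, hr2, hr2'⟩
      · exact List.cons_sublist_cons.mpr (List.singleton_sublist.mpr (Ab.mem₂ h2'))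
      · injection hr2 with h h'
        subst h
        exact absurd hyX haX

lemma ab_filter {X : List α} {x y : α} (p : α → Bool)
    (h : Ab X x y) (hx : p x = true) (hy : p y = true) : Ab (X.filter p) x y := by
  have := List.Sublist.filter p h
  simpa [List.filter, hx, hy] using this

lemma ab_of_filter {X : List α} {x y : α} {p : α → Bool}
    (h : Ab (X.filter p) x y) : Ab X x y :=
  h.trans List.filter_sublist

lemma nodup_pairwise_ab {X : List α} (hX : X.Nodup) : X.Pairwise (Ab X) := by
  induction X with
  | nil => simp
  | cons a X ih =>
    refine List.pairwise_cons.mpr ⟨?_, ?_⟩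
    · intro y hy
      exact List.cons_sublist_cons.mpr (List.singleton_sublist.mpr hy)
    · exact (ih hX.of_cons).imp (fun h => h.trans (List.sublist_cons_self a X))

lemma ab_of_pairwise {X : List α} {r : α → α → Prop} (hp : X.Pairwise r)
    {x y : α} (h : Ab X x y) : r x y := by
  have := List.Pairwise.sublist h hp
  rcases List.pairwise_cons.mp this with ⟨h1, _⟩
  exact h1 y (by simp)

lemma linOrd_perm {B : Finset α} {X Y : List α} (hX : IsLinOrd B X) (hY : IsLinOrd B Y) :
    X.Perm Y :=
  List.perm_of_nodup_nodup_toFinset_eq hX.1 hY.1 (hX.2.trans hY.2.symm)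

lemma linOrd_mem {B : Finset α} {X : List α} (hX : IsLinOrd B X) {x : α} :
    x ∈ X ↔ x ∈ B := by
  rw [← hX.2]; simp

lemma eq_of_ab_imp {B : Finset α} {X Y : List α} (hX : IsLinOrd B X) (hY : IsLinOrd B Y)
    (h : ∀ x y : α, Ab X x y → Ab Y x y) : X = Y := by
  have hperm : X.Perm Y := linOrd_perm hX hY
  have hsX : X.Pairwise (Ab Y) := (nodup_pairwise_ab hX.1).imp (by intro a b hab; exact h a b hab)
  have hsY : Y.Pairwise (Ab Y) := nodup_pairwise_ab hY.1
  haveI : IsAntisymm α (Ab Y) := ⟨fun a b h1 h2 => (ab_asymm hY.1 h1 h2).elim⟩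
  exact List.Perm.eq_of_pairwise (fun a b _ _ h1 h2 => (ab_asymm hY.1 h1 h2).elim) hsX hsY hperm

lemma mem_restrictOrd {X : List α} {t : Finset α} {x : α} :
    x ∈ restrictOrd X t ↔ x ∈ X ∧ x ∈ t := by
  simp [restrictOrd, List.mem_filter]

lemma restrictOrd_isLinOrd {B t : Finset α} {X : List α} (hX : IsLinOrd B X) (ht : t ⊆ B) :
    IsLinOrd t (restrictOrd X t) := by
  refine ⟨hX.1.filter _, ?_⟩
  unfold restrictOrd
  rw [List.toFinset_filter, hX.2]
  ext x
  simp only [Finset.mem_filter, decide_eq_true_eq]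
  exact ⟨fun h => h.2, fun h => ⟨ht h, h⟩⟩

lemma ab_restrict {X : List α} {t : Finset α} {x y : α}
    (h : Ab X x y) (hx : x ∈ t) (hy : y ∈ t) : Ab (restrictOrd X t) x y :=
  ab_filter _ h (by simpa using hx) (by simpa using hy)

lemma ab_of_restrict {X : List α} {t : Finset α} {x y : α}
    (h : Ab (restrictOrd X t) x y) : Ab X x y :=
  ab_of_filter h

lemma triple_card {a b c : α} (hab : a ≠ b) (hac : a ≠ c) (hbc : b ≠ c) :
    ({a, b, c} : Finset α).card = 3 := by
  rw [Finset.card_insert_of_notMem (by simp [hab, hac]),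
    Finset.card_insert_of_notMem (by simp [hbc]), Finset.card_singleton]

lemma list_eq_triple {l : List α} {a b c : α} (hn : l.Nodup) (ht : l.toFinset = {a, b, c})
    (hab : a ≠ b) (hac : a ≠ c) (hbc : b ≠ c) :
    l = [a, b, c] ∨ l = [a, c, b] ∨ l = [b, a, c] ∨ l = [b, c, a] ∨
      l = [c, a, b] ∨ l = [c, b, a] := by
  have hlen : l.length = 3 := by
    rw [← List.toFinset_card_of_nodup hn, ht, triple_card hab hac hbc]
  obtain ⟨x, y, z, rfl⟩ := List.length_eq_three.mp hlen
  have hx : x = a ∨ x = b ∨ x = c := by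
    have : x ∈ ({a, b, c} : Finset α) := ht ▸ (by simp)
    simpa using this
  have hy : y = a ∨ y = b ∨ y = c := by
    have : y ∈ ({a, b, c} : Finset α) := ht ▸ (by simp)
    simpa using this
  have hz : z = a ∨ z = b ∨ z = c := by
    have : z ∈ ({a, b, c} : Finset α) := ht ▸ (by simp)
    simpa using this
  have hxy : x ≠ y := by intro h; subst h; simp at hn
  have hxz : x ≠ z := by intro h; subst h; simp at hn
  have hyz : y ≠ z := by intro h; subst h; simp at hn
  rcases hx with rfl | rfl | rfl <;> rcases hy with rfl | rfl | rfl <;>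
    rcases hz with rfl | rfl | rfl <;> simp_all

lemma restrict_triple_form {B : Finset α} {X : List α} (hX : IsLinOrd B X) {a b c : α}
    (ha : a ∈ B) (hb : b ∈ B) (hc : c ∈ B) (hab : a ≠ b) (hac : a ≠ c) (hbc : b ≠ c) :
    restrictOrd X {a, b, c} = [a, b, c] ∨ restrictOrd X {a, b, c} = [a, c, b] ∨
    restrictOrd X {a, b, c} = [b, a, c] ∨ restrictOrd X {a, b, c} = [b, c, a] ∨
    restrictOrd X {a, b, c} = [c, a, b] ∨ restrictOrd X {a, b, c} = [c, b, a] := by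
  have hsub : ({a, b, c} : Finset α) ⊆ B := by
    intro x hx
    simp only [Finset.mem_insert, Finset.mem_singleton] at hx
    rcases hx with rfl | rfl | rfl <;> assumption
  have h := restrictOrd_isLinOrd hX hsub
  exact list_eq_triple h.1 h.2 hab hac hbc

lemma ab_form {p q r : α} {X : List α} {t : Finset α} (h : restrictOrd X t = [p, q, r]) :
    Ab X p q ∧ Ab X p r ∧ Ab X q r := by
  have s1 : List.Sublist [p, q] [p, q, r] :=
    List.cons_sublist_cons.mpr (List.cons_sublist_cons.mpr (List.nil_sublist [r]))
  have s2 : List.Sublist [p, r] [p, q, r] :=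
    List.cons_sublist_cons.mpr (List.sublist_cons_self q [r])
  have s3 : List.Sublist [q, r] [p, q, r] := List.sublist_cons_self p [q, r]
  rw [← h] at s1 s2 s3
  exact ⟨ab_of_restrict s1, ab_of_restrict s2, ab_of_restrict s3⟩

lemma restrictOrd_restrictOrd {B t : Finset α} (ht : t ⊆ B) (l : List α) :
    restrictOrd (restrictOrd l B) t = restrictOrd l t := by
  unfold restrictOrd
  rw [List.filter_filter]
  apply List.filter_congr
  intro x _
  by_cases hxt : x ∈ t <;> simp [hxt]
  exact ht hxt

lemma restrictDom_union (E F : Set (List α)) (t : Finset α) :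
    restrictDom (E ∪ F) t = restrictDom E t ∪ restrictDom F t :=
  Set.image_union _ _ _

lemma restrictDom_singleton (X : List α) (t : Finset α) :
    restrictDom {X} t = {restrictOrd X t} :=
  Set.image_singleton

lemma restrictDom_restrictDom {B t : Finset α} (ht : t ⊆ B) (D : Set (List α)) :
    restrictDom (restrictDom D B) t = restrictDom D t := by
  unfold restrictDom
  rw [Set.image_image]
  exact Set.image_congr (fun l _ => restrictOrd_restrictOrd ht l)

lemma peakPit_mono {B : Finset α} {E E' : Set (List α)} (hsub : E ⊆ E')
    (hE' : IsPeakPitDomain B E') (hlin : ∀ l ∈ E, IsLinOrd B l) : IsPeakPitDomain B E := by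
  refine ⟨hlin, ?_⟩
  intro a b c ha hb hc hab hac hbc
  obtain ⟨x, hx, hcond⟩ := hE'.2 a b c ha hb hc hab hac hbc
  refine ⟨x, hx, ?_⟩
  rcases hcond with h | h
  · exact Or.inl (fun l hl => h l (Set.image_mono hsub hl))
  · exact Or.inr (fun l hl => h l (Set.image_mono hsub hl))

lemma peakPit_restrict {A B : Finset α} {D : Set (List α)}
    (hD : IsPeakPitDomain A D) (hBA : B ⊆ A) :
    IsPeakPitDomain B (restrictDom D B) := by
  constructor
  · rintro l ⟨S, hS, rfl⟩
    exact restrictOrd_isLinOrd (hD.1 S hS) hBA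
  · intro a b c ha hb hc hab hac hbc
    obtain ⟨x, hx, hcond⟩ := hD.2 a b c (hBA ha) (hBA hb) (hBA hc) hab hac hbc
    have hsub : ({a, b, c} : Finset α) ⊆ B := by
      intro y hy
      simp only [Finset.mem_insert, Finset.mem_singleton] at hy
      rcases hy with rfl | rfl | rfl <;> assumption
    rw [restrictDom_restrictDom hsub]
    exact ⟨x, hx, hcond⟩


/-! ### Swaps of adjacent elements -/

lemma swap_perm (l₁ l₂ : List α) (u v : α) :
    (l₁ ++ v :: u :: l₂).Perm (l₁ ++ u :: v :: l₂) :=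
  List.Perm.append_left l₁ (List.Perm.swap u v l₂)

lemma swap_isLinOrd {B : Finset α} {l₁ l₂ : List α} {u v : α}
    (hU : IsLinOrd B (l₁ ++ u :: v :: l₂)) : IsLinOrd B (l₁ ++ v :: u :: l₂) :=
  ⟨(swap_perm l₁ l₂ u v).nodup_iff.mpr hU.1,
    (List.toFinset_eq_of_perm _ _ (swap_perm l₁ l₂ u v)).trans hU.2⟩

lemma swap_facts {l₁ l₂ : List α} {u v : α} (hn : (l₁ ++ u :: v :: l₂).Nodup) :
    u ≠ v ∧ u ∉ l₁ ∧ v ∉ l₁ ∧ u ∉ l₂ ∧ v ∉ l₂ ∧ l₁.Nodup ∧ l₂.Nodup := by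
  rw [List.nodup_append] at hn
  obtain ⟨h1, h2, h3⟩ := hn
  simp only [List.nodup_cons, List.mem_cons, not_or] at h2
  refine ⟨?_, ?_, ?_, ?_, ?_, h1, h2.2.2⟩
  · intro h; exact h2.1.1 h
  · intro h; exact h3 u h u (by simp) rfl
  · intro h; exact h3 v h v (by simp) rfl
  · exact h2.1.2
  · exact h2.2.1

lemma ab_swap_left {l₁ l₂ : List α} (u v : α) : Ab (l₁ ++ u :: v :: l₂) u v := by
  have h1 : List.Sublist [u, v] (u :: v :: l₂) :=
    List.cons_sublist_cons.mpr (List.cons_sublist_cons.mpr (List.nil_sublist l₂))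
  exact h1.trans (List.sublist_append_right l₁ _)

lemma alike_swap {l₁ l₂ : List α} {u v : α} (huv : u ≠ v) :
    Alike (l₁ ++ u :: v :: l₂) (l₁ ++ v :: u :: l₂) :=
  ⟨l₁, l₂, u, v, huv, rfl, rfl⟩

lemma filter_eq_single {l : List α} {c : α} {t : Finset α} (hn : l.Nodup) (hc : c ∈ l)
    (hct : c ∈ t) (hother : ∀ z ∈ l, z ≠ c → z ∉ t) :
    l.filter (fun z => decide (z ∈ t)) = [c] := by
  induction l with
  | nil => simp at hc
  | cons a l ih =>
    rcases List.mem_cons.mp hc with rfl | hc'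
    · rw [List.filter_cons, if_pos (by simpa using hct)]
      congr 1
      rw [List.filter_eq_nil_iff]
      intro z hz
      have hzc : z ≠ c := by rintro rfl; exact (List.nodup_cons.mp hn).1 hz
      simpa using hother z (by simp [hz]) hzc
    · have hat : a ∉ t := hother a (by simp) (by rintro rfl; exact (List.nodup_cons.mp hn).1 hc')
      rw [List.filter_cons, if_neg (by simpa using hat)]
      exact ih (List.nodup_cons.mp hn).2 hc' (fun z hz => hother z (by simp [hz]))

lemma filter_eq_nil' {l : List α} {t : Finset α} (h : ∀ z ∈ l, z ∉ t) :
    l.filter (fun z => decide (z ∈ t)) = [] := by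
  rw [List.filter_eq_nil_iff]
  intro z hz
  simpa using h z hz

lemma restrict_decomp_right {l₁ l₂ : List α} {x y c : α}
    (hn : (l₁ ++ x :: y :: l₂).Nodup) (hc : c ∈ l₂)
    (hxy : x ≠ y) (hxc : x ≠ c) (hyc : y ≠ c) :
    restrictOrd (l₁ ++ x :: y :: l₂) {x, y, c} = [x, y, c] := by
  obtain ⟨_, hx1, hy1, hx2, hy2, hn1, hn2⟩ := swap_facts hn
  have hc1 : c ∉ l₁ := by
    intro h
    exact (List.disjoint_right.mp (List.nodup_append'.mp hn).2.2 (by simp [hc])) h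
  unfold restrictOrd
  rw [List.filter_append]
  rw [filter_eq_nil' (t := {x, y, c}) (fun z hz => by
    simp only [Finset.mem_insert, Finset.mem_singleton]
    rintro (rfl | rfl | rfl)
    exacts [hx1 hz, hy1 hz, hc1 hz])]
  rw [List.filter_cons, if_pos (by simp), List.filter_cons, if_pos (by simp)]
  rw [filter_eq_single hn2 hc (by simp) (fun z hz hzc => by
    simp only [Finset.mem_insert, Finset.mem_singleton]
    rintro (rfl | rfl | rfl)
    exacts [hx2 hz, hy2 hz, hzc rfl])]
  simp

lemma restrict_decomp_left {l₁ l₂ : List α} {x y c : α}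
    (hn : (l₁ ++ x :: y :: l₂).Nodup) (hc : c ∈ l₁)
    (hxy : x ≠ y) (hxc : x ≠ c) (hyc : y ≠ c) :
    restrictOrd (l₁ ++ x :: y :: l₂) {x, y, c} = [c, x, y] := by
  obtain ⟨_, hx1, hy1, hx2, hy2, hn1, hn2⟩ := swap_facts hn
  have hc2 : c ∉ l₂ := by
    intro h
    exact (List.disjoint_left.mp (List.nodup_append'.mp hn).2.2 hc) (by simp [h])
  unfold restrictOrd
  rw [List.filter_append]
  rw [filter_eq_single hn1 hc (by simp) (fun z hz hzc => by
    simp only [Finset.mem_insert, Finset.mem_singleton]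
    rintro (rfl | rfl | rfl)
    exacts [hx1 hz, hy1 hz, hzc rfl])]
  rw [List.filter_cons, if_pos (by simp), List.filter_cons, if_pos (by simp)]
  rw [filter_eq_nil' (t := {x, y, c}) (fun z hz => by
    simp only [Finset.mem_insert, Finset.mem_singleton]
    rintro (rfl | rfl | rfl)
    exacts [hx2 hz, hy2 hz, hc2 hz])]
  simp

lemma restrict_swap_eq {l₁ l₂ : List α} {u v : α} {t : Finset α}
    (h : u ∉ t ∨ v ∉ t) :
    restrictOrd (l₁ ++ v :: u :: l₂) t = restrictOrd (l₁ ++ u :: v :: l₂) t := by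
  unfold restrictOrd
  rw [List.filter_append, List.filter_append]
  congr 1
  rcases h with h | h <;> by_cases h2 : v ∈ t <;> by_cases h3 : u ∈ t <;>
    simp_all [List.filter_cons]

/-! ### Existence of adjacent inversions -/

lemma chain'_of_no_adj (R : α → α → Prop) :
    ∀ (U : List α), (∀ (l₁ l₂ : List α) (u v : α), U = l₁ ++ u :: v :: l₂ → R u v) →
    U.Chain' R := by
  intro U
  induction U with
  | nil => intro _; exact List.isChain_nil
  | cons a U ih =>
    intro h
    refine List.IsChain.cons (ih ?_) ?_
    · intro l₁ l₂ u v huv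
      exact h (a :: l₁) l₂ u v (by simp [huv])
    · intro y hy
      cases U with
      | nil => simp at hy
      | cons b U' =>
        simp only [List.head?_cons, Option.mem_some_iff] at hy
        subst hy
        exact h [] U' a b rfl

lemma exists_adj_inv {B : Finset α} {U T : List α} (hU : IsLinOrd B U) (hT : IsLinOrd B T)
    (hne : U ≠ T) : ∃ (l₁ l₂ : List α) (u v : α), U = l₁ ++ u :: v :: l₂ ∧ Ab T v u := by
  by_contra h
  push_neg at h
  apply hne
  apply eq_of_ab_imp hU hT
  intro x y hxy
  have hchain : U.Chain' (Ab T) := by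
    apply chain'_of_no_adj
    intro l₁ l₂ u v huv
    have huU : u ∈ U := by simp [huv]
    have hvU : v ∈ U := by simp [huv]
    have huv : u ≠ v := by
      have := hU.1
      rw [huv, List.nodup_append] at this
      exact (by simpa using (List.nodup_cons.mp this.2.1).1 : ¬u = v ∧ u ∉ l₂).1
    rcases ab_total ((linOrd_mem hT).mpr ((linOrd_mem hU).mp huU))
      ((linOrd_mem hT).mpr ((linOrd_mem hU).mp hvU)) huv with h' | h'
    · exact h'
    · exact absurd h' (h l₁ l₂ u v (by assumption))
  haveI : IsTrans α (Ab T) := ⟨fun a b c h1 h2 => ab_trans hT.1 h1 h2⟩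
  exact ab_of_pairwise (List.isChain_iff_pairwise.mp hchain) hxy


/-! ### Pair restriction characterisation -/

lemma list_eq_pair {l : List α} {x y : α} (hn : l.Nodup) (ht : l.toFinset = {x, y})
    (hxy : x ≠ y) : l = [x, y] ∨ l = [y, x] := by
  have hlen : l.length = 2 := by
    rw [← List.toFinset_card_of_nodup hn, ht, Finset.card_insert_of_notMem (by simp [hxy]),
      Finset.card_singleton]
  obtain ⟨a, b, rfl⟩ := List.length_eq_two.mp hlen
  have hxa : x = a ∨ x = b := by
    have : x ∈ ({x, y} : Finset α) := by simp
    rw [← ht] at this; simpa using this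
  have hya : y = a ∨ y = b := by
    have : y ∈ ({x, y} : Finset α) := by simp
    rw [← ht] at this; simpa using this
  have hab : a ≠ b := by intro h; subst h; simp at hn
  rcases hxa with rfl | rfl <;> rcases hya with rfl | rfl <;> simp_all

lemma ab_iff_pair {X : List α} {x y : α} (hn : X.Nodup) (hx : x ∈ X) (hy : y ∈ X)
    (hxy : x ≠ y) : Ab X x y ↔ restrictOrd X {x, y} = [x, y] := by
  constructor
  · intro h
    have hnf : (restrictOrd X {x, y}).Nodup := hn.filter _
    have htf : (restrictOrd X {x, y}).toFinset = {x, y} := by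
      unfold restrictOrd
      rw [List.toFinset_filter]
      ext z
      simp only [Finset.mem_filter, decide_eq_true_eq, List.mem_toFinset, Finset.mem_insert,
        Finset.mem_singleton]
      constructor
      · exact fun h => h.2
      · rintro (rfl | rfl)
        · exact ⟨hx, Or.inl rfl⟩
        · exact ⟨hy, Or.inr rfl⟩
    rcases list_eq_pair hnf htf hxy with h' | h'
    · exact h'
    · exfalso
      have hs : List.Sublist [y, x] (restrictOrd X {x, y}) := by rw [h']
      exact ab_asymm hn h (ab_of_restrict hs)
  · intro h
    have : List.Sublist [x, y] (restrictOrd X {x, y}) := h ▸ List.Sublist.refl _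
    exact ab_of_restrict this

/-! ### Swapping and the `Ab` relation -/

lemma ab_swap_imp {l₁ l₂ : List α} {u v x y : α} (hn : (l₁ ++ u :: v :: l₂).Nodup)
    (h : Ab (l₁ ++ u :: v :: l₂) x y) (hne : ¬(x = u ∧ y = v)) :
    Ab (l₁ ++ v :: u :: l₂) x y := by
  have hn' : (l₁ ++ v :: u :: l₂).Nodup := (swap_perm l₁ l₂ u v).nodup_iff.mpr hn
  have hxy : x ≠ y := Ab.ne hn h
  have huv : u ≠ v := (swap_facts hn).1
  by_cases hboth : x = v ∧ y = u
  · obtain ⟨rfl, rfl⟩ := hboth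
    exact ab_swap_left x y
  · have hxm : x ∈ l₁ ++ v :: u :: l₂ := (swap_perm l₁ l₂ u v).mem_iff.mpr (Ab.mem₁ h)
    have hym : y ∈ l₁ ++ v :: u :: l₂ := (swap_perm l₁ l₂ u v).mem_iff.mpr (Ab.mem₂ h)
    have hnot : u ∉ ({x, y} : Finset α) ∨ v ∉ ({x, y} : Finset α) := by
      by_contra hcon
      push_neg at hcon
      obtain ⟨h1, h2⟩ := hcon
      simp only [Finset.mem_insert, Finset.mem_singleton] at h1 h2
      rcases h1 with h1 | h1 <;> rcases h2 with h2 | h2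
      · exact huv (h1.trans h2.symm)
      · exact hne ⟨h1.symm, h2.symm⟩
      · exact hboth ⟨h2.symm, h1.symm⟩
      · exact huv (h1.trans h2.symm)
    rw [ab_iff_pair hn' hxm hym hxy, restrict_swap_eq hnot]
    exact (ab_iff_pair hn (Ab.mem₁ h) (Ab.mem₂ h) hxy).mp h

/-! ### The inversion distance -/

open scoped Classical in
/-- The set of (ordered) pairs on which `X` and `Y` disagree. -/
noncomputable def invS (B : Finset α) (X Y : List α) : Finset (α × α) :=
  (B ×ˢ B).filter fun p => Ab X p.1 p.2 ∧ Ab Y p.2 p.1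

/-- The inversion distance between two linear orders. -/
noncomputable def dis (B : Finset α) (X Y : List α) : ℕ := (invS B X Y).card

open scoped Classical in
lemma mem_invS {B : Finset α} {X Y : List α} {p : α × α} :
    p ∈ invS B X Y ↔ p.1 ∈ B ∧ p.2 ∈ B ∧ Ab X p.1 p.2 ∧ Ab Y p.2 p.1 := by
  unfold invS
  rw [Finset.mem_filter, Finset.mem_product]
  tauto

lemma dis_self {B : Finset α} {X : List α} (hn : X.Nodup) : dis B X X = 0 := by
  unfold dis
  rw [Finset.card_eq_zero, Finset.eq_empty_iff_forall_notMem]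
  intro p hp
  obtain ⟨_, _, h1, h2⟩ := mem_invS.mp hp
  exact ab_asymm hn h1 h2

lemma eq_of_dis_eq_zero {B : Finset α} {X Y : List α} (hX : IsLinOrd B X)
    (hY : IsLinOrd B Y) (h : dis B X Y = 0) : X = Y := by
  by_contra hne
  obtain ⟨l₁, l₂, u, v, hdec, hba⟩ := exists_adj_inv hX hY hne
  have huv : Ab X u v := hdec ▸ ab_swap_left u v
  have hmem : (u, v) ∈ invS B X Y := mem_invS.mpr
    ⟨(linOrd_mem hX).mp (Ab.mem₁ huv), (linOrd_mem hX).mp (Ab.mem₂ huv), huv, hba⟩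
  unfold dis at h
  rw [Finset.card_eq_zero] at h
  simp [h] at hmem

lemma dis_swap {B : Finset α} {l₁ l₂ : List α} {u v : α} {T : List α}
    (hU : IsLinOrd B (l₁ ++ u :: v :: l₂)) (hT : IsLinOrd B T) (hTvu : Ab T v u) :
    dis B (l₁ ++ u :: v :: l₂) T = dis B (l₁ ++ v :: u :: l₂) T + 1 := by
  have hn := hU.1
  have hn' : (l₁ ++ v :: u :: l₂).Nodup := (swap_perm l₁ l₂ u v).nodup_iff.mpr hn
  have huv : u ≠ v := (swap_facts hn).1
  have hkey : invS B (l₁ ++ u :: v :: l₂) T =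
      insert (u, v) (invS B (l₁ ++ v :: u :: l₂) T) := by
    ext ⟨x, y⟩
    rw [Finset.mem_insert, mem_invS, mem_invS]
    constructor
    · rintro ⟨hxB, hyB, h1, h2⟩
      by_cases hc : x = u ∧ y = v
      · exact Or.inl (by simp [Prod.ext_iff, hc.1, hc.2])
      · exact Or.inr ⟨hxB, hyB, ab_swap_imp hn h1 hc, h2⟩
    · rintro (hp | ⟨hxB, hyB, h1, h2⟩)
      · injection hp with h1 h2
        subst h1; subst h2
        exact ⟨(linOrd_mem hU).mp (by simp), (linOrd_mem hU).mp (by simp),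
          ab_swap_left _ _, hTvu⟩
      · by_cases hc : x = v ∧ y = u
        · exfalso
          obtain ⟨rfl, rfl⟩ := hc
          exact ab_asymm hT.1 hTvu h2
        · refine ⟨hxB, hyB, ?_, h2⟩
          have := ab_swap_imp hn' h1 hc
          exact this
  have hnomem : (u, v) ∉ invS B (l₁ ++ v :: u :: l₂) T := by
    intro hmem
    obtain ⟨_, _, h1, _⟩ := mem_invS.mp hmem
    exact ab_asymm hn' h1 (ab_swap_left v u)
  unfold dis
  rw [hkey, Finset.card_insert_of_notMem hnomem]

lemma dis_le_alike {B : Finset α} {X Y T : List α} (hX : IsLinOrd B X)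
    (hA : Alike X Y) : dis B X T ≤ dis B Y T + 1 := by
  obtain ⟨l₁, l₂, x, y, hxy, rfl, rfl⟩ := hA
  have hn := hX.1
  have hsub : invS B (l₁ ++ x :: y :: l₂) T ⊆
      insert (x, y) (invS B (l₁ ++ y :: x :: l₂) T) := by
    rintro ⟨p, q⟩ hm
    obtain ⟨hpB, hqB, h1, h2⟩ := mem_invS.mp hm
    rw [Finset.mem_insert]
    by_cases hc : p = x ∧ q = y
    · exact Or.inl (by simp [Prod.ext_iff, hc.1, hc.2])
    · exact Or.inr (mem_invS.mpr ⟨hpB, hqB, ab_swap_imp hn h1 hc, h2⟩)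
  calc dis B (l₁ ++ x :: y :: l₂) T ≤ (insert (x, y) (invS B (l₁ ++ y :: x :: l₂) T)).card :=
        Finset.card_le_card hsub
    _ ≤ dis B (l₁ ++ y :: x :: l₂) T + 1 := Finset.card_insert_le _ _

lemma path_length_ge {B : Finset α} :
    ∀ (P : List (List α)), IsPathOn B P → ∀ {X T' : List α}, P.head? = some X →
      P.getLast? = some T' → dis B X T' + 1 ≤ P.length := by
  intro P
  induction P with
  | nil => intro h; exact absurd rfl h.1
  | cons a rest ih =>
    intro hP X T' hhead hlast
    have hX : a = X := by simpa using hhead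
    subst hX
    cases rest with
    | nil =>
      have hT : a = T' := by simpa using hlast
      subst hT
      have hnd := (hP.2.1 a (by simp)).1
      simp [dis_self hnd]
    | cons b rest' =>
      have hP' : IsPathOn B (b :: rest') :=
        ⟨by simp, fun l hl => hP.2.1 l (by simp [hl]), hP.2.2.tail⟩
      have hlast' : (b :: rest').getLast? = some T' := by
        rw [← List.getLast?_cons_cons (a := a)]
        exact hlast
      have hstep := ih hP' rfl hlast'
      have halike : Alike a b := by
        have := hP.2.2
        exact (List.isChain_cons_cons.mp this).1
      have hle := dis_le_alike (hP.2.1 a (by simp)) halike (T := T')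
      simp only [List.length_cons] at hstep ⊢
      omega

lemma dis_between {B : Finset α} {U T M : List α} (hU : IsLinOrd B U) (hT : IsLinOrd B T)
    (hM : IsLinOrd B M) (hbet : ∀ x y : α, Ab U x y → Ab T x y → Ab M x y) :
    dis B U M + dis B M T = dis B U T := by
  have hUM : invS B U M ⊆ invS B U T := by
    rintro ⟨x, y⟩ hm
    obtain ⟨hxB, hyB, h1, h2⟩ := mem_invS.mp hm
    refine mem_invS.mpr ⟨hxB, hyB, h1, ?_⟩
    rcases ab_total ((linOrd_mem hT).mpr ((linOrd_mem hU).mp (Ab.mem₂ h1)))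
        ((linOrd_mem hT).mpr ((linOrd_mem hU).mp (Ab.mem₁ h1))) (Ne.symm (Ab.ne hU.1 h1))
        with h | h
    · exact h
    · exact absurd (hbet x y h1 h) (fun hc => ab_asymm hM.1 hc h2)
  have hMT : invS B M T ⊆ invS B U T := by
    rintro ⟨x, y⟩ hm
    obtain ⟨hxB, hyB, h1, h2⟩ := mem_invS.mp hm
    refine mem_invS.mpr ⟨hxB, hyB, ?_, h2⟩
    rcases ab_total ((linOrd_mem hU).mpr ((linOrd_mem hM).mp (Ab.mem₁ h1)))
        ((linOrd_mem hU).mpr ((linOrd_mem hM).mp (Ab.mem₂ h1))) (Ab.ne hM.1 h1)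
        with h | h
    · exact h
    · exact absurd (hbet y x h (by
        rcases ab_total ((linOrd_mem hT).mpr ((linOrd_mem hM).mp (Ab.mem₂ h1)))
            ((linOrd_mem hT).mpr ((linOrd_mem hM).mp (Ab.mem₁ h1))) (Ne.symm (Ab.ne hM.1 h1))
            with h' | h'
        · exact h'
        · exact absurd h' (fun hc => ab_asymm hT.1 hc h2)))
        (fun hc => ab_asymm hM.1 h1 hc)
  have hunion : invS B U T = invS B U M ∪ invS B M T := by
    apply Finset.Subset.antisymm
    · rintro ⟨x, y⟩ hm
      obtain ⟨hxB, hyB, h1, h2⟩ := mem_invS.mp hm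
      rw [Finset.mem_union]
      rcases ab_total ((linOrd_mem hM).mpr ((linOrd_mem hU).mp (Ab.mem₁ h1)))
          ((linOrd_mem hM).mpr ((linOrd_mem hU).mp (Ab.mem₂ h1))) (Ab.ne hU.1 h1)
          with h | h
      · exact Or.inr (mem_invS.mpr ⟨hxB, hyB, h, h2⟩)
      · exact Or.inl (mem_invS.mpr ⟨hxB, hyB, h1, h⟩)
    · exact Finset.union_subset hUM hMT
  have hdisj : Disjoint (invS B U M) (invS B M T) := by
    rw [Finset.disjoint_left]
    rintro ⟨x, y⟩ hm1 hm2
    obtain ⟨_, _, _, h2⟩ := mem_invS.mp hm1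
    obtain ⟨_, _, h3, _⟩ := mem_invS.mp hm2
    exact ab_asymm hM.1 h3 h2
  unfold dis
  rw [hunion, Finset.card_union_of_disjoint hdisj]


/-! ### Head and last of a restricted triple -/

lemma triple_comm_swap (a b c : α) : ({a, b, c} : Finset α) = {b, a, c} := by
  ext x; simp only [Finset.mem_insert, Finset.mem_singleton]; tauto

lemma triple_comm_rot (a b c : α) : ({a, b, c} : Finset α) = {b, c, a} := by
  ext x; simp only [Finset.mem_insert, Finset.mem_singleton]; tauto

lemma restrict_head {B : Finset α} {X : List α} (hX : IsLinOrd B X) {a b c : α}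
    (ha : a ∈ B) (hb : b ∈ B) (hc : c ∈ B) (hab : a ≠ b) (hac : a ≠ c) (hbc : b ≠ c)
    (h1 : Ab X a b) (h2 : Ab X a c) : (restrictOrd X {a, b, c})[0]? = some a := by
  rcases restrict_triple_form hX ha hb hc hab hac hbc with h | h | h | h | h | h <;> rw [h]
  · rfl
  · rfl
  · exact absurd (ab_form h).1 (fun hcon => ab_asymm hX.1 hcon h1)
  · exact absurd (ab_form h).2.1 (fun hcon => ab_asymm hX.1 hcon h1)
  · exact absurd (ab_form h).1 (fun hcon => ab_asymm hX.1 hcon h2)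
  · exact absurd (ab_form h).2.1 (fun hcon => ab_asymm hX.1 hcon h2)

lemma restrict_last {B : Finset α} {X : List α} (hX : IsLinOrd B X) {a b c : α}
    (ha : a ∈ B) (hb : b ∈ B) (hc : c ∈ B) (hab : a ≠ b) (hac : a ≠ c) (hbc : b ≠ c)
    (h1 : Ab X b a) (h2 : Ab X c a) : (restrictOrd X {a, b, c})[2]? = some a := by
  rcases restrict_triple_form hX ha hb hc hab hac hbc with h | h | h | h | h | h <;> rw [h]
  · exact absurd (ab_form h).2.1 (fun hcon => ab_asymm hX.1 hcon h2)
  · exact absurd (ab_form h).2.1 (fun hcon => ab_asymm hX.1 hcon h1)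
  · exact absurd (ab_form h).2.2 (fun hcon => ab_asymm hX.1 hcon h2)
  · rfl
  · exact absurd (ab_form h).2.2 (fun hcon => ab_asymm hX.1 hcon h1)
  · rfl

lemma ab_of_restrict_head {B : Finset α} {X : List α} (hX : IsLinOrd B X) {a b c : α}
    (ha : a ∈ B) (hb : b ∈ B) (hc : c ∈ B) (hab : a ≠ b) (hac : a ≠ c) (hbc : b ≠ c)
    (h : (restrictOrd X {a, b, c})[0]? = some a) : Ab X a b ∧ Ab X a c := by
  rcases restrict_triple_form hX ha hb hc hab hac hbc with h' | h' | h' | h' | h' | h' <;>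
      rw [h'] at h
  · obtain ⟨x1, x2, _⟩ := ab_form h'
    exact ⟨x1, x2⟩
  · obtain ⟨x1, x2, _⟩ := ab_form h'
    exact ⟨x2, x1⟩
  · exact absurd h (by simp [Ne.symm hab])
  · exact absurd h (by simp [Ne.symm hab])
  · exact absurd h (by simp [Ne.symm hac])
  · exact absurd h (by simp [Ne.symm hac])

lemma ab_of_restrict_last {B : Finset α} {X : List α} (hX : IsLinOrd B X) {a b c : α}
    (ha : a ∈ B) (hb : b ∈ B) (hc : c ∈ B) (hab : a ≠ b) (hac : a ≠ c) (hbc : b ≠ c)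
    (h : (restrictOrd X {a, b, c})[2]? = some a) : Ab X b a ∧ Ab X c a := by
  rcases restrict_triple_form hX ha hb hc hab hac hbc with h' | h' | h' | h' | h' | h' <;>
      rw [h'] at h
  · exact absurd h (by simp [Ne.symm hac])
  · exact absurd h (by simp [Ne.symm hab])
  · exact absurd h (by simp [Ne.symm hac])
  · obtain ⟨_, x2, x3⟩ := ab_form h'
    exact ⟨x2, x3⟩
  · exact absurd h (by simp [Ne.symm hab])
  · obtain ⟨_, x2, x3⟩ := ab_form h'
    exact ⟨x3, x2⟩


/-! ### The majority relation and median orders -/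

def MajR (U T S : List α) (x y : α) : Prop :=
  (Ab U x y ∧ Ab T x y) ∨ (Ab U x y ∧ Ab S x y) ∨ (Ab T x y ∧ Ab S x y)

variable {B : Finset α} {E : Set (List α)} {U T S : List α}

lemma majR_memB (hU : IsLinOrd B U) (hT : IsLinOrd B T) {x y : α}
    (h : MajR U T S x y) : x ∈ B ∧ y ∈ B := by
  rcases h with ⟨h1, _⟩ | ⟨h1, _⟩ | ⟨h1, _⟩
  exacts [⟨(linOrd_mem hU).mp (Ab.mem₁ h1), (linOrd_mem hU).mp (Ab.mem₂ h1)⟩,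
    ⟨(linOrd_mem hU).mp (Ab.mem₁ h1), (linOrd_mem hU).mp (Ab.mem₂ h1)⟩,
    ⟨(linOrd_mem hT).mp (Ab.mem₁ h1), (linOrd_mem hT).mp (Ab.mem₂ h1)⟩]

lemma majR_asymm (hU : IsLinOrd B U) (hT : IsLinOrd B T) (hS : IsLinOrd B S) {x y : α}
    (h1 : MajR U T S x y) (h2 : MajR U T S y x) : False := by
  have nU : ∀ p q : α, Ab U p q → Ab U q p → False := fun _ _ => ab_asymm hU.1
  have nT : ∀ p q : α, Ab T p q → Ab T q p → False := fun _ _ => ab_asymm hT.1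
  have nS : ∀ p q : α, Ab S p q → Ab S q p → False := fun _ _ => ab_asymm hS.1
  rcases h1 with ⟨a1, a2⟩ | ⟨a1, a2⟩ | ⟨a1, a2⟩ <;> rcases h2 with ⟨b1, b2⟩ | ⟨b1, b2⟩ | ⟨b1, b2⟩ <;>
    first
      | exact nU _ _ a1 b1
      | exact nU _ _ a1 b2
      | exact nU _ _ a2 b1
      | exact nU _ _ a2 b2
      | exact nT _ _ a1 b1
      | exact nT _ _ a1 b2
      | exact nT _ _ a2 b1
      | exact nT _ _ a2 b2
      | exact nS _ _ a1 b1
      | exact nS _ _ a1 b2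
      | exact nS _ _ a2 b1
      | exact nS _ _ a2 b2

lemma majR_ne (hU : IsLinOrd B U) (hT : IsLinOrd B T) {x y : α}
    (h : MajR U T S x y) : x ≠ y := by
  rintro rfl
  rcases h with ⟨h1, _⟩ | ⟨h1, _⟩ | ⟨h1, _⟩
  · exact (Ab.ne hU.1 h1) rfl
  · exact (Ab.ne hU.1 h1) rfl
  · exact (Ab.ne hT.1 h1) rfl

lemma majR_total (hU : IsLinOrd B U) (hT : IsLinOrd B T) (hS : IsLinOrd B S) {x y : α}
    (hx : x ∈ B) (hy : y ∈ B) (hxy : x ≠ y) : MajR U T S x y ∨ MajR U T S y x := by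
  rcases ab_total ((linOrd_mem hU).mpr hx) ((linOrd_mem hU).mpr hy) hxy with u1 | u1 <;>
    rcases ab_total ((linOrd_mem hT).mpr hx) ((linOrd_mem hT).mpr hy) hxy with t1 | t1 <;>
    rcases ab_total ((linOrd_mem hS).mpr hx) ((linOrd_mem hS).mpr hy) hxy with s1 | s1 <;>
    first
      | exact Or.inl (Or.inl ⟨u1, t1⟩)
      | exact Or.inr (Or.inl ⟨u1, t1⟩)
      | exact Or.inl (Or.inr (Or.inl ⟨u1, s1⟩))
      | exact Or.inr (Or.inr (Or.inl ⟨u1, s1⟩))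
      | exact Or.inl (Or.inr (Or.inr ⟨t1, s1⟩))
      | exact Or.inr (Or.inr (Or.inr ⟨t1, s1⟩))

lemma majR_cycle_top (hE : IsPeakPitDomain B E)
    (hU : IsLinOrd B U) (hT : IsLinOrd B T) (hS : IsLinOrd B S)
    (hUE : U ∈ E) (hTE : T ∈ E) (hSE : S ∈ E)
    {x y z : α} (hxy : x ≠ y) (hxz : x ≠ z) (hyz : y ≠ z)
    (hxB : x ∈ B) (hyB : y ∈ B) (hzB : z ∈ B)
    (h1 : MajR U T S x y) (h2 : MajR U T S y z)
    (hcond : NeverCond (restrictDom E {x, y, z}) x 0) : False := by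
  have key : ∀ W : List α, IsLinOrd B W → W ∈ E → ¬(Ab W x y ∧ Ab W y z) := by
    rintro W hW hWE ⟨k1, k2⟩
    exact hcond _ ⟨W, hWE, rfl⟩
      (restrict_head hW hxB hyB hzB hxy hxz hyz k1 (ab_trans hW.1 k1 k2))
  have nU := key U hU hUE
  have nT := key T hT hTE
  have nS := key S hS hSE
  rcases h1 with ⟨a1, a2⟩ | ⟨a1, a2⟩ | ⟨a1, a2⟩ <;> rcases h2 with ⟨b1, b2⟩ | ⟨b1, b2⟩ | ⟨b1, b2⟩ <;>
    first
      | exact nU ⟨a1, b1⟩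
      | exact nT ⟨a2, b1⟩
      | exact nT ⟨a1, b1⟩
      | exact nS ⟨a2, b2⟩
      | exact nT ⟨a1, b2⟩
      | exact nS ⟨a2, b1⟩

lemma majR_cycle_bot (hE : IsPeakPitDomain B E)
    (hU : IsLinOrd B U) (hT : IsLinOrd B T) (hS : IsLinOrd B S)
    (hUE : U ∈ E) (hTE : T ∈ E) (hSE : S ∈ E)
    {x y z : α} (hxy : x ≠ y) (hxz : x ≠ z) (hyz : y ≠ z)
    (hxB : x ∈ B) (hyB : y ∈ B) (hzB : z ∈ B)
    (h2 : MajR U T S y z) (h3 : MajR U T S z x)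
    (hcond : NeverCond (restrictDom E {x, y, z}) x 2) : False := by
  have key : ∀ W : List α, IsLinOrd B W → W ∈ E → ¬(Ab W y z ∧ Ab W z x) := by
    rintro W hW hWE ⟨k1, k2⟩
    exact hcond _ ⟨W, hWE, rfl⟩
      (restrict_last hW hxB hyB hzB hxy hxz hyz (ab_trans hW.1 k1 k2) k2)
  have nU := key U hU hUE
  have nT := key T hT hTE
  have nS := key S hS hSE
  rcases h2 with ⟨a1, a2⟩ | ⟨a1, a2⟩ | ⟨a1, a2⟩ <;> rcases h3 with ⟨b1, b2⟩ | ⟨b1, b2⟩ | ⟨b1, b2⟩ <;>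
    first
      | exact nU ⟨a1, b1⟩
      | exact nT ⟨a2, b1⟩
      | exact nT ⟨a1, b1⟩
      | exact nS ⟨a2, b2⟩
      | exact nT ⟨a1, b2⟩
      | exact nS ⟨a2, b1⟩

lemma majR_cycle (hE : IsPeakPitDomain B E)
    (hU : IsLinOrd B U) (hT : IsLinOrd B T) (hS : IsLinOrd B S)
    (hUE : U ∈ E) (hTE : T ∈ E) (hSE : S ∈ E)
    {x y z : α} (h1 : MajR U T S x y) (h2 : MajR U T S y z) (h3 : MajR U T S z x) :
    False := by
  have hxy : x ≠ y := majR_ne hU hT h1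
  have hyz : y ≠ z := majR_ne hU hT h2
  have hzx : z ≠ x := majR_ne hU hT h3
  have hxB : x ∈ B := (majR_memB hU hT h1).1
  have hyB : y ∈ B := (majR_memB hU hT h1).2
  have hzB : z ∈ B := (majR_memB hU hT h2).2
  obtain ⟨w, hw, hcond⟩ := hE.2 x y z hxB hyB hzB hxy (Ne.symm hzx) hyz
  simp only [Finset.mem_insert, Finset.mem_singleton] at hw
  have hrot1 : ({x, y, z} : Finset α) = {y, z, x} := triple_comm_rot x y z
  have hrot2 : ({x, y, z} : Finset α) = {z, x, y} := by
    rw [triple_comm_rot x y z, triple_comm_rot y z x]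
  rcases hw with rfl | hw | hw
  · rcases hcond with hc | hc
    · exact majR_cycle_top hE hU hT hS hUE hTE hSE hxy (Ne.symm hzx) hyz hxB hyB hzB h1 h2 hc
    · exact majR_cycle_bot hE hU hT hS hUE hTE hSE hxy (Ne.symm hzx) hyz hxB hyB hzB h2 h3 hc
  · subst hw
    rw [hrot1] at hcond
    rcases hcond with hc | hc
    · exact majR_cycle_top hE hU hT hS hUE hTE hSE hyz (Ne.symm hxy) hzx hyB hzB hxB h2 h3 hc
    · exact majR_cycle_bot hE hU hT hS hUE hTE hSE hyz (Ne.symm hxy) hzx hyB hzB hxB h3 h1 hc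
  · subst hw
    rw [hrot2] at hcond
    rcases hcond with hc | hc
    · exact majR_cycle_top hE hU hT hS hUE hTE hSE hzx (Ne.symm hyz) hxy hzB hxB hyB h3 h1 hc
    · exact majR_cycle_bot hE hU hT hS hUE hTE hSE hzx (Ne.symm hyz) hxy hzB hxB hyB h1 h2 hc

lemma majR_trans (hE : IsPeakPitDomain B E)
    (hU : IsLinOrd B U) (hT : IsLinOrd B T) (hS : IsLinOrd B S)
    (hUE : U ∈ E) (hTE : T ∈ E) (hSE : S ∈ E)
    {x y z : α} (h1 : MajR U T S x y) (h2 : MajR U T S y z) : MajR U T S x z := by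
  by_cases hxz : x = z
  · subst hxz
    exact absurd h2 (fun h => majR_asymm hU hT hS h1 h)
  · rcases majR_total hU hT hS (majR_memB hU hT h1).1 (majR_memB hU hT h2).2 hxz with h | h
    · exact h
    · exact absurd h (fun h => majR_cycle hE hU hT hS hUE hTE hSE h1 h2 h)

open scoped Classical in
/-- The median order of three linear orders. -/
noncomputable def medList (U T S : List α) : List α :=
  (U.attach.mergeSort (fun a b => decide (MajR U T S a.1 b.1 ∨ a.1 = b.1))).map Subtype.val

lemma medList_perm : (medList U T S).Perm U := by
  classical
  unfold medList
  have h1 := List.mergeSort_perm U.attach (fun a b => decide (MajR U T S a.1 b.1 ∨ a.1 = b.1))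
  have h2 := h1.map Subtype.val
  simpa using h2

lemma medList_isLinOrd (hU : IsLinOrd B U) : IsLinOrd B (medList U T S) :=
  ⟨(medList_perm).nodup_iff.mpr hU.1,
    (List.toFinset_eq_of_perm _ _ medList_perm).trans hU.2⟩

lemma medList_pairwise (hE : IsPeakPitDomain B E)
    (hU : IsLinOrd B U) (hT : IsLinOrd B T) (hS : IsLinOrd B S)
    (hUE : U ∈ E) (hTE : T ∈ E) (hSE : S ∈ E) :
    (medList U T S).Pairwise (fun a b => MajR U T S a b ∨ a = b) := by
  classical
  unfold medList
  rw [List.pairwise_map]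
  have := List.pairwise_mergeSort
    (le := fun (a b : {x // x ∈ U}) => decide (MajR U T S a.1 b.1 ∨ a.1 = b.1))
    (fun a b c hab hbc => by
      simp only [decide_eq_true_eq] at *
      rcases hab with hab | hab
      · rcases hbc with hbc | hbc
        · exact Or.inl (majR_trans hE hU hT hS hUE hTE hSE hab hbc)
        · exact Or.inl (hbc ▸ hab)
      · rcases hbc with hbc | hbc
        · exact Or.inl (hab ▸ hbc)
        · exact Or.inr (hab.trans hbc))
    (fun a b => by
      simp only [Bool.or_eq_true, decide_eq_true_eq]
      by_cases hab : a.1 = b.1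
      · tauto
      · rcases majR_total hU hT hS ((linOrd_mem hU).mp a.2) ((linOrd_mem hU).mp b.2) hab
          with h | h <;> tauto)
    U.attach
  exact this.imp (by intro a b h; simpa using h)

lemma majR_of_ab_med (hE : IsPeakPitDomain B E)
    (hU : IsLinOrd B U) (hT : IsLinOrd B T) (hS : IsLinOrd B S)
    (hUE : U ∈ E) (hTE : T ∈ E) (hSE : S ∈ E) {x y : α}
    (h : Ab (medList U T S) x y) : MajR U T S x y := by
  have hnd : (medList U T S).Nodup := (medList_isLinOrd hU).1
  rcases ab_of_pairwise (medList_pairwise hE hU hT hS hUE hTE hSE) h with h' | h'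
  · exact h'
  · exact absurd h' (Ab.ne hnd h)

lemma ab_med_of_majR (hE : IsPeakPitDomain B E)
    (hU : IsLinOrd B U) (hT : IsLinOrd B T) (hS : IsLinOrd B S)
    (hUE : U ∈ E) (hTE : T ∈ E) (hSE : S ∈ E) {x y : α}
    (h : MajR U T S x y) : Ab (medList U T S) x y := by
  have hM := medList_isLinOrd (T := T) (S := S) hU
  have hx : x ∈ medList U T S := (linOrd_mem hM).mpr (majR_memB hU hT h).1
  have hy : y ∈ medList U T S := (linOrd_mem hM).mpr (majR_memB hU hT h).2
  rcases ab_total hx hy (majR_ne hU hT h) with h' | h'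
  · exact h'
  · exact absurd (majR_of_ab_med hE hU hT hS hUE hTE hSE h')
      (fun hc => majR_asymm hU hT hS h hc)

lemma medList_peakPit (hE : IsPeakPitDomain B E)
    (hU : IsLinOrd B U) (hT : IsLinOrd B T) (hS : IsLinOrd B S)
    (hUE : U ∈ E) (hTE : T ∈ E) (hSE : S ∈ E) :
    IsPeakPitDomain B (E ∪ {medList U T S}) := by
  have hM := medList_isLinOrd (T := T) (S := S) hU
  constructor
  · rintro l (hl | hl)
    · exact hE.1 l hl
    · rw [Set.mem_singleton_iff] at hl
      subst hl
      exact hM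
  · intro a b c ha hb hc hab hac hbc
    obtain ⟨w, hw, hcond⟩ := hE.2 a b c ha hb hc hab hac hbc
    refine ⟨w, hw, ?_⟩
    rw [restrictDom_union]
    have hsing : restrictDom {medList U T S} ({a, b, c} : Finset α) =
        {restrictOrd (medList U T S) {a, b, c}} := restrictDom_singleton _ _
    simp only [Finset.mem_insert, Finset.mem_singleton] at hw
    have main : ∀ p q r : α, p ∈ B → q ∈ B → r ∈ B → p ≠ q → p ≠ r → q ≠ r →
        (NeverCond (restrictDom E {p, q, r}) p 0 →
          (restrictOrd (medList U T S) {p, q, r})[0]? ≠ some p) ∧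
        (NeverCond (restrictDom E {p, q, r}) p 2 →
          (restrictOrd (medList U T S) {p, q, r})[2]? ≠ some p) := by
      intro p q r hp hq hr hpq hpr hqr
      constructor
      · intro hnc hcon
        obtain ⟨k1, k2⟩ := ab_of_restrict_head hM hp hq hr hpq hpr hqr hcon
        have m1 := majR_of_ab_med hE hU hT hS hUE hTE hSE k1
        have m2 := majR_of_ab_med hE hU hT hS hUE hTE hSE k2
        rcases m1 with ⟨a1, a2⟩ | ⟨a1, a2⟩ | ⟨a1, a2⟩ <;>
          rcases m2 with ⟨b1, b2⟩ | ⟨b1, b2⟩ | ⟨b1, b2⟩ <;>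
          first
            | exact hnc _ ⟨U, hUE, rfl⟩ (restrict_head hU hp hq hr hpq hpr hqr
                (by assumption) (by assumption))
            | exact hnc _ ⟨T, hTE, rfl⟩ (restrict_head hT hp hq hr hpq hpr hqr
                (by assumption) (by assumption))
            | exact hnc _ ⟨S, hSE, rfl⟩ (restrict_head hS hp hq hr hpq hpr hqr
                (by assumption) (by assumption))
      · intro hnc hcon
        obtain ⟨k1, k2⟩ := ab_of_restrict_last hM hp hq hr hpq hpr hqr hcon
        have m1 := majR_of_ab_med hE hU hT hS hUE hTE hSE k1
        have m2 := majR_of_ab_med hE hU hT hS hUE hTE hSE k2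
        rcases m1 with ⟨a1, a2⟩ | ⟨a1, a2⟩ | ⟨a1, a2⟩ <;>
          rcases m2 with ⟨b1, b2⟩ | ⟨b1, b2⟩ | ⟨b1, b2⟩ <;>
          first
            | exact hnc _ ⟨U, hUE, rfl⟩ (restrict_last hU hp hq hr hpq hpr hqr
                (by assumption) (by assumption))
            | exact hnc _ ⟨T, hTE, rfl⟩ (restrict_last hT hp hq hr hpq hpr hqr
                (by assumption) (by assumption))
            | exact hnc _ ⟨S, hSE, rfl⟩ (restrict_last hS hp hq hr hpq hpr hqr
                (by assumption) (by assumption))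
    have hswap : ({a, b, c} : Finset α) = {b, a, c} := triple_comm_swap a b c
    have hrot : ({a, b, c} : Finset α) = {c, a, b} := by
      rw [triple_comm_rot a b c, triple_comm_rot b c a]
    rcases hcond with hcnd | hcnd
    · refine Or.inl ?_
      intro l hl
      rcases hl with hl | hl
      · exact hcnd l hl
      · rw [hsing, Set.mem_singleton_iff] at hl
        subst hl
        rcases hw with rfl | hw | hw
        · exact (main w b c ha hb hc hab hac hbc).1 hcnd
        · subst hw
          rw [hswap] at hcnd ⊢
          exact (main w a c hb ha hc (Ne.symm hab) hbc hac).1 hcnd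
        · subst hw
          rw [hrot] at hcnd ⊢
          exact (main w a b hc ha hb (Ne.symm hac) (Ne.symm hbc) hab).1 hcnd
    · refine Or.inr ?_
      intro l hl
      rcases hl with hl | hl
      · exact hcnd l hl
      · rw [hsing, Set.mem_singleton_iff] at hl
        subst hl
        rcases hw with rfl | hw | hw
        · exact (main w b c ha hb hc hab hac hbc).2 hcnd
        · subst hw
          rw [hswap] at hcnd ⊢
          exact (main w a c hb ha hc (Ne.symm hab) hbc hac).2 hcnd
        · subst hw
          rw [hrot] at hcnd ⊢
          exact (main w a b hc ha hb (Ne.symm hac) (Ne.symm hbc) hab).2 hcnd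


/-! ### Extraction of a witness from a failed swap -/

lemma failure_witness {B : Finset α} {E : Set (List α)} {l₁ l₂ : List α} {u v : α} {T : List α}
    (hE : IsPeakPitDomain B E) (hUE : (l₁ ++ u :: v :: l₂) ∈ E) (hTE : T ∈ E)
    (hTvu : Ab T v u)
    (hnot : ¬ IsPeakPitDomain B (E ∪ {l₁ ++ v :: u :: l₂})) :
    ∃ S ∈ E, ∃ p1 p2 q1 q2 : α,
      Ab (l₁ ++ u :: v :: l₂) p1 p2 ∧ Ab T p2 p1 ∧ Ab S p1 p2 ∧
      Ab (l₁ ++ u :: v :: l₂) q1 q2 ∧ Ab T q2 q1 ∧ Ab S q2 q1 := by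
  set U := l₁ ++ u :: v :: l₂ with hUdef
  set U' := l₁ ++ v :: u :: l₂ with hU'def
  have hU : IsLinOrd B U := hE.1 U hUE
  have hT : IsLinOrd B T := hE.1 T hTE
  have hU' : IsLinOrd B U' := swap_isLinOrd hU
  obtain ⟨huv, _, _, _, _, _, _⟩ := swap_facts hU.1
  have hlin' : ∀ l ∈ E ∪ {U'}, IsLinOrd B l := by
    rintro l (hl | hl)
    · exact hE.1 l hl
    · rw [Set.mem_singleton_iff] at hl
      subst hl
      exact hU'
  have hfail0 : ¬ ∀ a b c : α, a ∈ B → b ∈ B → c ∈ B → a ≠ b → a ≠ c → b ≠ c →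
      ∃ x ∈ ({a, b, c} : Finset α),
        NeverCond (restrictDom (E ∪ {U'}) {a, b, c}) x 0 ∨
          NeverCond (restrictDom (E ∪ {U'}) {a, b, c}) x 2 :=
    fun h => hnot ⟨hlin', h⟩
  push_neg at hfail0
  obtain ⟨a, b, c, ha, hb, hc, hab, hac, hbc, hfail⟩ := hfail0
  have hviol : ∀ x ∈ ({a, b, c} : Finset α),
      (∃ l ∈ restrictDom (E ∪ {U'}) {a, b, c}, l[(0 : ℕ)]? = some x) ∧
      (∃ l ∈ restrictDom (E ∪ {U'}) {a, b, c}, l[(2 : ℕ)]? = some x) := by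
    intro x hx
    have h := hfail x hx
    constructor
    · by_contra hcon
      push_neg at hcon
      exact h.1 (fun l hl => hcon l hl)
    · by_contra hcon
      push_neg at hcon
      exact h.2 (fun l hl => hcon l hl)
  clear hfail
  -- both u and v belong to the failing triple
  have huvt : u ∈ ({a, b, c} : Finset α) ∧ v ∈ ({a, b, c} : Finset α) := by
    by_contra hcon
    have hswapeq : restrictOrd U' {a, b, c} = restrictOrd U {a, b, c} :=
      restrict_swap_eq (by tauto)
    have hdom : restrictDom (E ∪ {U'}) {a, b, c} = restrictDom E {a, b, c} := by
      rw [restrictDom_union]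
      apply Set.union_eq_self_of_subset_right
      rintro l hl
      rw [restrictDom_singleton, Set.mem_singleton_iff] at hl
      subst hl
      exact ⟨U, hUE, hswapeq.symm⟩
    obtain ⟨x, hx, hcond⟩ := hE.2 a b c ha hb hc hab hac hbc
    have hv := hviol x hx
    rcases hcond with hcnd | hcnd
    · obtain ⟨l, hl, hl0⟩ := hv.1
      rw [hdom] at hl
      exact hcnd l hl hl0
    · obtain ⟨l, hl, hl2⟩ := hv.2
      rw [hdom] at hl
      exact hcnd l hl hl2
  -- identify the third element c'
  have hsubuv : ({u, v} : Finset α) ⊆ {a, b, c} := by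
    intro x hx
    simp only [Finset.mem_insert, Finset.mem_singleton] at hx
    rcases hx with rfl | rfl
    · exact huvt.1
    · exact huvt.2
  have hone : (({a, b, c} : Finset α) \ {u, v}).card = 1 := by
    rw [Finset.card_sdiff_of_subset hsubuv, triple_card hab hac hbc,
      Finset.card_insert_of_notMem (by simp [huv]), Finset.card_singleton]
  obtain ⟨w, hw⟩ := Finset.card_eq_one.mp hone
  have hwmem : w ∈ ({a, b, c} : Finset α) \ {u, v} := by rw [hw]; exact Finset.mem_singleton_self w
  have hwB : w ∈ B := by
    have := (Finset.mem_sdiff.mp hwmem).1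
    simp only [Finset.mem_insert, Finset.mem_singleton] at this
    rcases this with rfl | rfl | rfl <;> assumption
  have huw : u ≠ w := by
    intro h
    exact (Finset.mem_sdiff.mp hwmem).2 (by simp [h])
  have hvw : v ≠ w := by
    intro h
    exact (Finset.mem_sdiff.mp hwmem).2 (by simp [h])
  have htset : ({a, b, c} : Finset α) = {u, v, w} := by
    have h1 := Finset.union_sdiff_of_subset hsubuv
    rw [hw] at h1
    rw [← h1]
    ext x
    simp only [Finset.mem_union, Finset.mem_insert, Finset.mem_singleton]
    tauto
  rw [htset] at hviol
  have huB : u ∈ B := (linOrd_mem hU).mp (by simp [hUdef])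
  have hvB : v ∈ B := (linOrd_mem hU).mp (by simp [hUdef])
  -- memberships in B for u v w are huB hvB hwB; distinctness huv huw hvw
  have hTform := restrict_triple_form hT huB hvB hwB huv huw hvw
  -- dispose of the forms contradicting `Ab T v u`
  have hTnf1 : restrictOrd T {u, v, w} ≠ [u, v, w] := by
    intro h
    exact ab_asymm hT.1 (ab_form h).1 hTvu
  have hTnf2 : restrictOrd T {u, v, w} ≠ [u, w, v] := by
    intro h
    exact ab_asymm hT.1 (ab_form h).2.1 hTvu
  have hTnf3 : restrictOrd T {u, v, w} ≠ [w, u, v] := by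
    intro h
    exact ab_asymm hT.1 (ab_form h).2.2 hTvu
  -- helper to pick violators out of the union domain
  have hpick : ∀ (x : α) (k : ℕ), (∃ l ∈ restrictDom (E ∪ {U'}) {u, v, w}, l[k]? = some x) →
      ((restrictOrd U' {u, v, w})[k]? = some x ∨
        ∃ S ∈ E, (restrictOrd S {u, v, w})[k]? = some x) := by
    rintro x k ⟨l, hl, hlk⟩
    rw [restrictDom_union, restrictDom_singleton] at hl
    rcases hl with ⟨S, hS, rfl⟩ | hl
    · exact Or.inr ⟨S, hS, hlk⟩
    · rw [Set.mem_singleton_iff] at hl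
      subst hl
      exact Or.inl hlk
  -- case split on the position of w in U
  have hwU : w ∈ l₁ ++ u :: v :: l₂ := (linOrd_mem hU).mpr hwB
  have hwl : w ∈ l₁ ∨ w ∈ l₂ := by
    rcases List.mem_append.mp hwU with h | h
    · exact Or.inl h
    · simp only [List.mem_cons] at h
      rcases h with h | h | h
      · exact absurd h.symm huw
      · exact absurd h.symm hvw
      · exact Or.inr h
  rcases hwl with hwin | hwin
  · -- w above the pair:  U_t = [w,u,v],  U'_t = [w,v,u]
    have hUt : restrictOrd U {u, v, w} = [w, u, v] :=
      restrict_decomp_left hU.1 hwin huv huw hvw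
    have hU't : restrictOrd U' {u, v, w} = [w, v, u] := by
      have h0 := restrict_decomp_left hU'.1 hwin (Ne.symm huv) hvw huw
      rwa [triple_comm_swap v u w] at h0
    -- violator for (u,0) must come from E
    obtain ⟨S₂, hS₂E, hS₂0⟩ : ∃ S ∈ E, (restrictOrd S {u, v, w})[(0 : ℕ)]? = some u := by
      rcases hpick u 0 (hviol u (by simp)).1 with h | h
      · rw [hU't] at h
        simp only [List.getElem?_cons_zero, Option.some.injEq] at h
        exact absurd h huw.symm
      · exact h
    obtain ⟨S₃, hS₃E, hS₃0⟩ : ∃ S ∈ E, (restrictOrd S {u, v, w})[(0 : ℕ)]? = some v := by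
      rcases hpick v 0 (hviol v (by simp)).1 with h | h
      · rw [hU't] at h
        simp only [List.getElem?_cons_zero, Option.some.injEq] at h
        exact absurd h hvw.symm
      · exact h
    obtain ⟨S₁, hS₁E, hS₁2⟩ : ∃ S ∈ E, (restrictOrd S {u, v, w})[(2 : ℕ)]? = some w := by
      rcases hpick w 2 (hviol w (by simp)).2 with h | h
      · rw [hU't] at h
        simp only [List.getElem?_cons_succ, List.getElem?_cons_zero, Option.some.injEq] at h
        exact absurd h huw
      · exact h
    have hS₂ : IsLinOrd B S₂ := hE.1 S₂ hS₂E
    obtain ⟨hS₂uv, hS₂uw⟩ : Ab S₂ u v ∧ Ab S₂ u w :=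
      ab_of_restrict_head hS₂ huB hvB hwB huv huw hvw hS₂0
    rcases hTform with h | h | h | h | h | h
    · exact absurd h hTnf1
    · exact absurd h hTnf2
    · -- T_t = [v,u,w] : good case
      refine ⟨S₂, hS₂E, u, v, w, u, ?_⟩
      have hUform := ab_form hUt
      have hTf := ab_form h
      exact ⟨ab_swap_left u v, hTvu, hS₂uv, hUform.1, hTf.2.2, hS₂uw⟩
    · -- T_t = [v,w,u] : contradiction with peak-pittedness of E
      exfalso
      obtain ⟨x, hx, hcond⟩ := hE.2 u v w huB hvB hwB huv huw hvw
      simp only [Finset.mem_insert, Finset.mem_singleton] at hx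
      have hTt0 : (restrictOrd T {u, v, w})[(0 : ℕ)]? = some v := by rw [h]; rfl
      have hTt2 : (restrictOrd T {u, v, w})[(2 : ℕ)]? = some u := by rw [h]; rfl
      have hUt0 : (restrictOrd U {u, v, w})[(0 : ℕ)]? = some w := by rw [hUt]; rfl
      have hUt2 : (restrictOrd U {u, v, w})[(2 : ℕ)]? = some v := by rw [hUt]; rfl
      rcases hx with rfl | rfl | rfl <;> rcases hcond with hcnd | hcnd
      · exact hcnd _ ⟨S₂, hS₂E, rfl⟩ hS₂0
      · exact hcnd _ ⟨T, hTE, rfl⟩ hTt2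
      · exact hcnd _ ⟨T, hTE, rfl⟩ hTt0
      · exact hcnd _ ⟨U, hUE, rfl⟩ hUt2
      · exact hcnd _ ⟨U, hUE, rfl⟩ hUt0
      · exact hcnd _ ⟨S₁, hS₁E, rfl⟩ hS₁2
    · exact absurd h hTnf3
    · -- T_t = [w,v,u] : contradiction with peak-pittedness of E
      exfalso
      obtain ⟨x, hx, hcond⟩ := hE.2 u v w huB hvB hwB huv huw hvw
      simp only [Finset.mem_insert, Finset.mem_singleton] at hx
      have hTt0 : (restrictOrd T {u, v, w})[(0 : ℕ)]? = some w := by rw [h]; rfl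
      have hTt2 : (restrictOrd T {u, v, w})[(2 : ℕ)]? = some u := by rw [h]; rfl
      have hUt0 : (restrictOrd U {u, v, w})[(0 : ℕ)]? = some w := by rw [hUt]; rfl
      have hUt2 : (restrictOrd U {u, v, w})[(2 : ℕ)]? = some v := by rw [hUt]; rfl
      rcases hx with rfl | rfl | rfl <;> rcases hcond with hcnd | hcnd
      · exact hcnd _ ⟨S₂, hS₂E, rfl⟩ hS₂0
      · exact hcnd _ ⟨T, hTE, rfl⟩ hTt2
      · exact hcnd _ ⟨S₃, hS₃E, rfl⟩ hS₃0
      · exact hcnd _ ⟨U, hUE, rfl⟩ hUt2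
      · exact hcnd _ ⟨U, hUE, rfl⟩ hUt0
      · exact hcnd _ ⟨S₁, hS₁E, rfl⟩ hS₁2
  · -- w below the pair:  U_t = [u,v,w],  U'_t = [v,u,w]
    have hUt : restrictOrd U {u, v, w} = [u, v, w] :=
      restrict_decomp_right hU.1 hwin huv huw hvw
    have hU't : restrictOrd U' {u, v, w} = [v, u, w] := by
      have h0 := restrict_decomp_right hU'.1 hwin (Ne.symm huv) hvw huw
      rwa [triple_comm_swap v u w] at h0
    obtain ⟨S₂, hS₂E, hS₂2⟩ : ∃ S ∈ E, (restrictOrd S {u, v, w})[(2 : ℕ)]? = some v := by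
      rcases hpick v 2 (hviol v (by simp)).2 with h | h
      · rw [hU't] at h
        simp only [List.getElem?_cons_succ, List.getElem?_cons_zero, Option.some.injEq] at h
        exact absurd h.symm hvw
      · exact h
    obtain ⟨S₃, hS₃E, hS₃0⟩ : ∃ S ∈ E, (restrictOrd S {u, v, w})[(0 : ℕ)]? = some w := by
      rcases hpick w 0 (hviol w (by simp)).1 with h | h
      · rw [hU't] at h
        simp only [List.getElem?_cons_zero, Option.some.injEq] at h
        exact absurd h hvw
      · exact h
    obtain ⟨S₁, hS₁E, hS₁2⟩ : ∃ S ∈ E, (restrictOrd S {u, v, w})[(2 : ℕ)]? = some u := by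
      rcases hpick u 2 (hviol u (by simp)).2 with h | h
      · rw [hU't] at h
        simp only [List.getElem?_cons_succ, List.getElem?_cons_zero, Option.some.injEq] at h
        exact absurd h huw.symm
      · exact h
    have hS₂lin : IsLinOrd B S₂ := hE.1 S₂ hS₂E
    obtain ⟨hS₂uv, hS₂wv⟩ : Ab S₂ u v ∧ Ab S₂ w v := by
      have h0 : (restrictOrd S₂ {v, u, w})[(2 : ℕ)]? = some v := by
        rwa [triple_comm_swap v u w]
      exact ab_of_restrict_last hS₂lin hvB huB hwB (Ne.symm huv) hvw huw h0
    rcases hTform with h | h | h | h | h | h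
    · exact absurd h hTnf1
    · exact absurd h hTnf2
    · -- T_t = [v,u,w] : contradiction
      exfalso
      obtain ⟨x, hx, hcond⟩ := hE.2 u v w huB hvB hwB huv huw hvw
      simp only [Finset.mem_insert, Finset.mem_singleton] at hx
      have hTt0 : (restrictOrd T {u, v, w})[(0 : ℕ)]? = some v := by rw [h]; rfl
      have hUt0 : (restrictOrd U {u, v, w})[(0 : ℕ)]? = some u := by rw [hUt]; rfl
      have hUt2 : (restrictOrd U {u, v, w})[(2 : ℕ)]? = some w := by rw [hUt]; rfl
      rcases hx with rfl | rfl | rfl <;> rcases hcond with hcnd | hcnd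
      · exact hcnd _ ⟨U, hUE, rfl⟩ hUt0
      · exact hcnd _ ⟨S₁, hS₁E, rfl⟩ hS₁2
      · exact hcnd _ ⟨T, hTE, rfl⟩ hTt0
      · exact hcnd _ ⟨S₂, hS₂E, rfl⟩ hS₂2
      · exact hcnd _ ⟨S₃, hS₃E, rfl⟩ hS₃0
      · exact hcnd _ ⟨U, hUE, rfl⟩ hUt2
    · -- T_t = [v,w,u] : contradiction
      exfalso
      obtain ⟨x, hx, hcond⟩ := hE.2 u v w huB hvB hwB huv huw hvw
      simp only [Finset.mem_insert, Finset.mem_singleton] at hx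
      have hTt0 : (restrictOrd T {u, v, w})[(0 : ℕ)]? = some v := by rw [h]; rfl
      have hTt2 : (restrictOrd T {u, v, w})[(2 : ℕ)]? = some u := by rw [h]; rfl
      have hUt0 : (restrictOrd U {u, v, w})[(0 : ℕ)]? = some u := by rw [hUt]; rfl
      have hUt2 : (restrictOrd U {u, v, w})[(2 : ℕ)]? = some w := by rw [hUt]; rfl
      rcases hx with rfl | rfl | rfl <;> rcases hcond with hcnd | hcnd
      · exact hcnd _ ⟨U, hUE, rfl⟩ hUt0
      · exact hcnd _ ⟨T, hTE, rfl⟩ hTt2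
      · exact hcnd _ ⟨T, hTE, rfl⟩ hTt0
      · exact hcnd _ ⟨S₂, hS₂E, rfl⟩ hS₂2
      · exact hcnd _ ⟨S₃, hS₃E, rfl⟩ hS₃0
      · exact hcnd _ ⟨U, hUE, rfl⟩ hUt2
    · exact absurd h hTnf3
    · -- T_t = [w,v,u] : good case
      refine ⟨S₂, hS₂E, u, v, v, w, ?_⟩
      have hUform := ab_form hUt
      have hTf := ab_form h
      exact ⟨ab_swap_left u v, hTvu, hS₂uv, hUform.2.2, hTf.1, hS₂wv⟩


/-! ### Main induction -/

lemma main_ind {B : Finset α} :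
    ∀ d : ℕ, ∀ E : Set (List α), ∀ U T : List α, IsPeakPitDomain B E → U ∈ E → T ∈ E →
      dis B U T = d →
      ∃ P : List (List α), IsPath B P U T ∧ P.length = d + 1 ∧
        IsPeakPitDomain B (E ∪ {l | l ∈ P}) := by
  intro d
  induction d using Nat.strong_induction_on with
  | _ d ih =>
    intro E U T hE hUE hTE hd
    have hU : IsLinOrd B U := hE.1 U hUE
    have hT : IsLinOrd B T := hE.1 T hTE
    by_cases hUT : U = T
    · subst hUT
      have hd0 : d = 0 := by rw [← hd, dis_self hU.1]
      subst hd0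
      refine ⟨[U], ⟨⟨by simp, ?_, List.isChain_singleton _⟩, by simp, by simp⟩, by simp, ?_⟩
      · intro l hl
        simp only [List.mem_singleton] at hl
        subst hl
        exact hU
      · have heq : E ∪ {l | l ∈ [U]} = E := by
          apply Set.union_eq_self_of_subset_right
          intro l hl
          simp only [Set.mem_setOf_eq, List.mem_singleton] at hl
          subst hl
          exact hUE
        rw [heq]
        exact hE
    · obtain ⟨l₁, l₂, u, v, hdec, hTvu⟩ := exists_adj_inv hU hT hUT
      subst hdec
      have huv : u ≠ v := (swap_facts hU.1).1
      have hU' : IsLinOrd B (l₁ ++ v :: u :: l₂) := swap_isLinOrd hU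
      have hdd : dis B (l₁ ++ u :: v :: l₂) T = dis B (l₁ ++ v :: u :: l₂) T + 1 :=
        dis_swap hU hT hTvu
      by_cases hpp : IsPeakPitDomain B (E ∪ {l₁ ++ v :: u :: l₂})
      · obtain ⟨P', hPath', hlen', hPP'⟩ := ih (d - 1) (by omega) (E ∪ {l₁ ++ v :: u :: l₂})
          (l₁ ++ v :: u :: l₂) T hpp (Or.inr rfl) (Or.inl hTE) (by omega)
        refine ⟨(l₁ ++ u :: v :: l₂) :: P', ⟨⟨by simp, ?_, ?_⟩, by simp, ?_⟩, ?_, ?_⟩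
        · intro l hl
          rcases List.mem_cons.mp hl with rfl | hl'
          · exact hU
          · exact hPath'.1.2.1 l hl'
        · apply List.IsChain.cons hPath'.1.2.2
          intro y hy
          have hy' : y = l₁ ++ v :: u :: l₂ := by
            rw [hPath'.2.1] at hy
            exact (by simpa using hy : _ = y).symm
          subst hy'
          exact alike_swap huv
        · rcases P' with _ | ⟨X, rest⟩
          · exact absurd rfl hPath'.1.1
          · rw [List.getLast?_cons_cons]
            exact hPath'.2.2
        · simp only [List.length_cons, hlen']
          omega
        · apply peakPit_mono ?_ hPP' ?_
          · rintro l (hl | hl)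
            · exact Or.inl (Or.inl hl)
            · simp only [Set.mem_setOf_eq, List.mem_cons] at hl
              rcases hl with rfl | hl'
              · exact Or.inl (Or.inl hUE)
              · exact Or.inr hl'
          · rintro l (hl | hl)
            · exact hE.1 l hl
            · simp only [Set.mem_setOf_eq, List.mem_cons] at hl
              rcases hl with rfl | hl'
              · exact hU
              · exact hPath'.1.2.1 l hl'
      · obtain ⟨S, hSE, p1, p2, q1, q2, hUp, hTp, hSp, hUq, hTq, hSq⟩ :=
          failure_witness hE hUE hTE hTvu hpp
        have hSlin : IsLinOrd B S := hE.1 S hSE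
        set M := medList (l₁ ++ u :: v :: l₂) T S with hMdef
        have hM : IsLinOrd B M := medList_isLinOrd hU
        have hMpp : IsPeakPitDomain B (E ∪ {M}) :=
          medList_peakPit hE hU hT hSlin hUE hTE hSE
        have hbet : ∀ x y : α, Ab (l₁ ++ u :: v :: l₂) x y → Ab T x y → Ab M x y :=
          fun x y h1 h2 => ab_med_of_majR hE hU hT hSlin hUE hTE hSE (Or.inl ⟨h1, h2⟩)
        have hMneU : M ≠ l₁ ++ u :: v :: l₂ := by
          intro heq
          have hq : Ab M q2 q1 :=
            ab_med_of_majR hE hU hT hSlin hUE hTE hSE (Or.inr (Or.inr ⟨hTq, hSq⟩))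
          rw [heq] at hq
          exact ab_asymm hU.1 hUq hq
        have hMneT : M ≠ T := by
          intro heq
          have hp : Ab M p1 p2 :=
            ab_med_of_majR hE hU hT hSlin hUE hTE hSE (Or.inr (Or.inl ⟨hUp, hSp⟩))
          rw [heq] at hp
          exact ab_asymm hT.1 hp hTp
        have hsum : dis B (l₁ ++ u :: v :: l₂) M + dis B M T = d := by
          rw [← hd]
          exact dis_between hU hT hM hbet
        have hd1 : 1 ≤ dis B (l₁ ++ u :: v :: l₂) M := by
          rcases Nat.eq_zero_or_pos (dis B (l₁ ++ u :: v :: l₂) M) with h0 | h0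
          · exact absurd (eq_of_dis_eq_zero hU hM h0).symm hMneU
          · exact h0
        have hd2 : 1 ≤ dis B M T := by
          rcases Nat.eq_zero_or_pos (dis B M T) with h0 | h0
          · exact absurd (eq_of_dis_eq_zero hM hT h0) hMneT
          · exact h0
        obtain ⟨P₁, hPath₁, hlen₁, hPP₁⟩ := ih (dis B (l₁ ++ u :: v :: l₂) M) (by omega)
          (E ∪ {M}) (l₁ ++ u :: v :: l₂) M hMpp (Or.inl hUE) (Or.inr rfl) rfl
        obtain ⟨P₂, hPath₂, hlen₂, hPP₂⟩ := ih (dis B M T) (by omega)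
          ((E ∪ {M}) ∪ {l | l ∈ P₁}) M T hPP₁ (Or.inl (Or.inr rfl)) (Or.inl (Or.inl hTE)) rfl
        rcases P₂ with _ | ⟨M₂, t2⟩
        · exact absurd rfl hPath₂.1.1
        · have hM₂ : M₂ = M := by
            have := hPath₂.2.1
            simpa using this
          subst hM₂
          have ht2ne : t2 ≠ [] := by
            intro h
            subst h
            simp only [List.length_cons, List.length_nil] at hlen₂
            omega
          refine ⟨P₁ ++ t2, ⟨⟨?_, ?_, ?_⟩, ?_, ?_⟩, ?_, ?_⟩
          · simp [hPath₁.1.1]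
          · intro l hl
            rcases List.mem_append.mp hl with hl' | hl'
            · exact hPath₁.1.2.1 l hl'
            · exact hPath₂.1.2.1 l (by simp [hl'])
          · apply List.IsChain.append hPath₁.1.2.2 (hPath₂.1.2.2.tail)
            intro x hx y hy
            have hx' : x = M := by
              rw [hPath₁.2.2] at hx
              exact (by simpa using hx : _ = x).symm
            subst hx'
            rcases t2 with _ | ⟨Y, t2'⟩
            · exact absurd rfl ht2ne
            · have hy' : y = Y := (by simpa using hy : _ = y).symm
              subst hy'
              exact (List.isChain_cons_cons.mp hPath₂.1.2.2).1
          · rw [List.head?_append]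
            rw [hPath₁.2.1]
            rfl
          · rcases t2 with _ | ⟨Y, t2'⟩
            · exact absurd rfl ht2ne
            · rw [List.getLast?_append]
              have h5 := hPath₂.2.2
              rw [List.getLast?_cons_cons] at h5
              rw [h5]
              rfl
          · rw [List.length_append]
            simp only [List.length_cons] at hlen₂
            omega
          · apply peakPit_mono ?_ hPP₂ ?_
            · rintro l (hl | hl)
              · exact Or.inl (Or.inl (Or.inl hl))
              · simp only [Set.mem_setOf_eq] at hl
                rcases List.mem_append.mp hl with hl' | hl'
                · exact Or.inl (Or.inr hl')
                · exact Or.inr (by simp [hl'])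
            · rintro l (hl | hl)
              · exact hE.1 l hl
              · simp only [Set.mem_setOf_eq] at hl
                rcases List.mem_append.mp hl with hl' | hl'
                · exact hPath₁.1.2.1 l hl'
                · exact hPath₂.1.2.1 l (by simp [hl'])


end CDaux


/-- Let `D` be a peak-pit Condorcet domain on `A`, let `R, T ∈ D`
and let `B ⊆ A` with `|B| ≥ 3`.  Then there is a geodesic `𝒜` connecting
`R_B` and `T_B` such that `D_B ∪ K(𝒜)` is a peak-pit Condorcet domain. -/
theorem exists_geodesic_peakPit_restriction [DecidableEq α] (A B : Finset α)
    (D : Set (List α)) (hD : IsPeakPitDomain A D)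
    (R T : List α) (hR : R ∈ D) (hT : T ∈ D)
    (hBA : B ⊆ A) (hB : 3 ≤ B.card) :
    ∃ P : List (List α),
      IsGeodesic B P (restrictOrd R B) (restrictOrd T B) ∧
        IsPeakPitDomain B (restrictDom D B ∪ {l | l ∈ P}) := by
  classical
  have hE : IsPeakPitDomain B (restrictDom D B) := CDaux.peakPit_restrict hD hBA
  have hRm : restrictOrd R B ∈ restrictDom D B := ⟨R, hR, rfl⟩
  have hTm : restrictOrd T B ∈ restrictDom D B := ⟨T, hT, rfl⟩
  obtain ⟨P, hPath, hlen, hPP⟩ :=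
    CDaux.main_ind (CDaux.dis B (restrictOrd R B) (restrictOrd T B))
      (restrictDom D B) (restrictOrd R B) (restrictOrd T B) hE hRm hTm rfl
  refine ⟨P, ⟨hPath, ?_⟩, hPP⟩
  intro Q hQ
  have hge := CDaux.path_length_ge Q hQ.1 hQ.2.1 hQ.2.2
  omega
end

section
/- Let a, b, c be distinct alternatives, let T ∈ L({a,b,c}), and let 𝒜 = (R_1,…,R_k) be a geodesic on L({a,b,c}) connecting abc and T. Then T = cba if and only if (a,b), (a,c) and (b,c) are all switching pairs occurring in S(𝒜). Moreover, if T = cba, then {R_1,…,R_k} satisfies a unique never-condition, which is either b N_{{a,b,c}} 3 or b N_{{a,b,c}} 1; and (a) N({R_1,…,R_k}) = {b N_{{a,b,c}} 3} if and only if 𝒜 = (abc, bac, bca, cba), if and only if S(𝒜) is the sequence (a,b), (a,c), (b,c); (b) N({R_1,…,R_k}) = {b N_{{a,b,c}} 1} if and only if 𝒜 = (abc, acb, cab, cba), if and only if S(𝒜) is the sequence (b,c), (a,c), (a,b). -/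
/-!
Common definitions for formalizing Condorcet domains.

A linear order on a finite set `A : Finset α` of alternatives is encoded as a
duplicate-free list enumerating the elements of `A` from most preferred (head)
to least preferred (last).
-/

variable {α : Type*}

section Helpers

variable [DecidableEq α]

lemma alike_three {x y z : α} {T : List α} (h : Alike [x, y, z] T) :
    T = [y, x, z] ∨ T = [x, z, y] := by
  obtain ⟨l₁, l₂, u, v, huv, h1, h2⟩ := h
  match l₁ with
  | [] =>
    simp only [List.nil_append] at h1 h2
    obtain ⟨rfl, rfl, hl⟩ : x = u ∧ y = v ∧ [z] = l₂ := by simpa using h1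
    left; simp [h2, ← hl]
  | [w] =>
    simp only [List.cons_append, List.nil_append] at h1 h2
    obtain ⟨rfl, h1⟩ : x = w ∧ [y, z] = u :: v :: l₂ := by simpa using h1
    obtain ⟨rfl, rfl, hl⟩ : y = u ∧ z = v ∧ ([] : List α) = l₂ := by simpa using h1
    right; simp [h2, ← hl]
  | w1 :: w2 :: t =>
    exfalso
    have := congrArg List.length h1
    simp [List.length_append] at this
    omega

lemma alike_swap01 (x y z : α) (h : x ≠ y) : Alike [x, y, z] [y, x, z] :=
  ⟨[], [z], x, y, h, rfl, rfl⟩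

lemma alike_swap12 (x y z : α) (h : y ≠ z) : Alike [x, y, z] [x, z, y] :=
  ⟨[x], [], y, z, h, rfl, rfl⟩

lemma isLinOrd_triple {a b c x y z : α} (hxy : x ≠ y) (hxz : x ≠ z) (hyz : y ≠ z)
    (h : ({x, y, z} : Finset α) = {a, b, c}) : IsLinOrd {a, b, c} [x, y, z] := by
  refine ⟨by simp [hxy, hxz, hyz], by simpa using h⟩

lemma isLinOrd_cases {a b c : α} (hab : a ≠ b) (hac : a ≠ c) (hbc : b ≠ c) {l : List α}
    (h : IsLinOrd {a, b, c} l) :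
    l = [a, b, c] ∨ l = [a, c, b] ∨ l = [b, a, c] ∨ l = [b, c, a] ∨
      l = [c, a, b] ∨ l = [c, b, a] := by
  obtain ⟨hnd, hfin⟩ := h
  have hcard : ({a, b, c} : Finset α).card = 3 := by
    rw [Finset.card_insert_of_notMem (by simp [hab, hac]),
        Finset.card_insert_of_notMem (by simp [hbc]), Finset.card_singleton]
  have hlen : l.length = 3 := by
    have h1 := List.toFinset_card_of_nodup hnd
    rw [hfin, hcard] at h1
    omega
  match l, hlen with
  | [x, y, z], _ =>
    have hxy : x ≠ y := by
      intro h'; subst h'; simp at hnd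
    have hxz : x ≠ z := by
      intro h'; subst h'; simp at hnd
    have hyz : y ≠ z := by
      intro h'; subst h'; simp at hnd
    have hA : a = x ∨ a = y ∨ a = z := by
      have : a ∈ [x, y, z].toFinset := by rw [hfin]; simp
      simpa using this
    have hB : b = x ∨ b = y ∨ b = z := by
      have : b ∈ [x, y, z].toFinset := by rw [hfin]; simp
      simpa using this
    have hC : c = x ∨ c = y ∨ c = z := by
      have : c ∈ [x, y, z].toFinset := by rw [hfin]; simp
      simpa using this
    rcases hA with rfl | rfl | rfl <;> rcases hB with rfl | rfl | rfl <;>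
      rcases hC with rfl | rfl | rfl <;> simp_all

lemma isPath_geo1 {a b c : α} (hab : a ≠ b) (hac : a ≠ c) (hbc : b ≠ c) :
    IsPath {a, b, c} [[a, b, c], [b, a, c], [b, c, a], [c, b, a]] [a, b, c] [c, b, a] := by
  refine ⟨⟨by simp, ?_, ?_⟩, by simp, by simp⟩
  · intro l hl
    simp only [List.mem_cons, List.not_mem_nil, or_false] at hl
    rcases hl with rfl | rfl | rfl | rfl
    · exact isLinOrd_triple hab hac hbc rfl
    · exact isLinOrd_triple (Ne.symm hab) hbc hac (by ext t; simp; tauto)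
    · exact isLinOrd_triple hbc (Ne.symm hab) (Ne.symm hac) (by ext t; simp; tauto)
    · exact isLinOrd_triple (Ne.symm hbc) (Ne.symm hac) (Ne.symm hab) (by ext t; simp; tauto)
  · refine List.isChain_cons_cons.mpr ⟨alike_swap01 a b c hab, ?_⟩
    refine List.isChain_cons_cons.mpr ⟨alike_swap12 b a c hac, ?_⟩
    refine List.isChain_cons_cons.mpr ⟨alike_swap01 b c a hbc, ?_⟩
    exact List.isChain_singleton _

lemma isPath_geo2 {a b c : α} (hab : a ≠ b) (hac : a ≠ c) (hbc : b ≠ c) :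
    IsPath {a, b, c} [[a, b, c], [a, c, b], [c, a, b], [c, b, a]] [a, b, c] [c, b, a] := by
  refine ⟨⟨by simp, ?_, ?_⟩, by simp, by simp⟩
  · intro l hl
    simp only [List.mem_cons, List.not_mem_nil, or_false] at hl
    rcases hl with rfl | rfl | rfl | rfl
    · exact isLinOrd_triple hab hac hbc rfl
    · exact isLinOrd_triple hac hab (Ne.symm hbc) (by ext t; simp; tauto)
    · exact isLinOrd_triple (Ne.symm hac) (Ne.symm hbc) hab (by ext t; simp; tauto)
    · exact isLinOrd_triple (Ne.symm hbc) (Ne.symm hac) (Ne.symm hab) (by ext t; simp; tauto)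
  · refine List.isChain_cons_cons.mpr ⟨alike_swap12 a b c hbc, ?_⟩
    refine List.isChain_cons_cons.mpr ⟨alike_swap01 a c b hac, ?_⟩
    refine List.isChain_cons_cons.mpr ⟨alike_swap12 c a b hab, ?_⟩
    exact List.isChain_singleton _

lemma isPath_short {a b c : α} (hab : a ≠ b) (hac : a ≠ c) (hbc : b ≠ c)
    {T : List α} (hT : IsLinOrd {a, b, c} T) (hTne : T ≠ [c, b, a]) :
    ∃ Q : List (List α), IsPath {a, b, c} Q [a, b, c] T ∧ Q.length ≤ 3 := by
  have h1 : IsLinOrd {a, b, c} [a, b, c] := isLinOrd_triple hab hac hbc rfl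
  have h2 : IsLinOrd {a, b, c} [a, c, b] :=
    isLinOrd_triple hac hab (Ne.symm hbc) (by ext t; simp; tauto)
  have h3 : IsLinOrd {a, b, c} [b, a, c] :=
    isLinOrd_triple (Ne.symm hab) hbc hac (by ext t; simp; tauto)
  have h4 : IsLinOrd {a, b, c} [b, c, a] :=
    isLinOrd_triple hbc (Ne.symm hab) (Ne.symm hac) (by ext t; simp; tauto)
  have h5 : IsLinOrd {a, b, c} [c, a, b] :=
    isLinOrd_triple (Ne.symm hac) (Ne.symm hbc) hab (by ext t; simp; tauto)
  rcases isLinOrd_cases hab hac hbc hT with rfl | rfl | rfl | rfl | rfl | rfl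
  · exact ⟨[[a, b, c]], ⟨⟨by simp, by simpa using h1, List.isChain_singleton _⟩, by simp, by simp⟩, by simp⟩
  · refine ⟨[[a, b, c], [a, c, b]], ⟨⟨by simp, ?_, ?_⟩, by simp, by simp⟩, by simp⟩
    · intro l hl
      simp only [List.mem_cons, List.not_mem_nil, or_false] at hl
      rcases hl with rfl | rfl
      exacts [h1, h2]
    · exact List.isChain_cons_cons.mpr ⟨alike_swap12 a b c hbc, List.isChain_singleton _⟩
  · refine ⟨[[a, b, c], [b, a, c]], ⟨⟨by simp, ?_, ?_⟩, by simp, by simp⟩, by simp⟩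
    · intro l hl
      simp only [List.mem_cons, List.not_mem_nil, or_false] at hl
      rcases hl with rfl | rfl
      exacts [h1, h3]
    · exact List.isChain_cons_cons.mpr ⟨alike_swap01 a b c hab, List.isChain_singleton _⟩
  · refine ⟨[[a, b, c], [b, a, c], [b, c, a]], ⟨⟨by simp, ?_, ?_⟩, by simp, by simp⟩, by simp⟩
    · intro l hl
      simp only [List.mem_cons, List.not_mem_nil, or_false] at hl
      rcases hl with rfl | rfl | rfl
      exacts [h1, h3, h4]
    · exact List.isChain_cons_cons.mpr ⟨alike_swap01 a b c hab,
        List.isChain_cons_cons.mpr ⟨alike_swap12 b a c hac, List.isChain_singleton _⟩⟩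
  · refine ⟨[[a, b, c], [a, c, b], [c, a, b]], ⟨⟨by simp, ?_, ?_⟩, by simp, by simp⟩, by simp⟩
    · intro l hl
      simp only [List.mem_cons, List.not_mem_nil, or_false] at hl
      rcases hl with rfl | rfl | rfl
      exacts [h1, h2, h5]
    · exact List.isChain_cons_cons.mpr ⟨alike_swap12 a b c hbc,
        List.isChain_cons_cons.mpr ⟨alike_swap01 a c b hac, List.isChain_singleton _⟩⟩
  · exact absurd rfl hTne

lemma geodesic_cba {a b c : α} (hab : a ≠ b) (hac : a ≠ c) (hbc : b ≠ c)
    {P : List (List α)} (hP : IsGeodesic {a, b, c} P [a, b, c] [c, b, a]) :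
    P = [[a, b, c], [b, a, c], [b, c, a], [c, b, a]] ∨
      P = [[a, b, c], [a, c, b], [c, a, b], [c, b, a]] := by
  obtain ⟨⟨⟨hne, hlin, hchain⟩, hhead, hlast⟩, hmin⟩ := hP
  have hlen4 : P.length ≤ 4 := by
    have := hmin _ (isPath_geo1 hab hac hbc)
    simpa using this
  rcases P with _ | ⟨R1, _ | ⟨R2, _ | ⟨R3, _ | ⟨R4, _ | ⟨R5, rest⟩⟩⟩⟩⟩
  · simp at hhead
  · simp only [List.head?_cons, Option.some.injEq] at hhead
    simp only [List.getLast?_singleton, Option.some.injEq] at hlast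
    subst hhead
    exfalso
    simp [hab, hac, hbc, Ne.symm hab, Ne.symm hac, Ne.symm hbc] at hlast
  · simp only [List.head?_cons, Option.some.injEq] at hhead
    subst hhead
    have hlast' : R2 = [c, b, a] := by simpa using hlast
    subst hlast'
    have hA : Alike [a, b, c] [c, b, a] := (List.isChain_cons_cons.mp hchain).1
    exfalso
    rcases alike_three hA with h | h <;>
      simp [hab, hac, hbc, Ne.symm hab, Ne.symm hac, Ne.symm hbc] at h
  · simp only [List.head?_cons, Option.some.injEq] at hhead
    subst hhead
    have hlast' : R3 = [c, b, a] := by simpa using hlast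
    subst hlast'
    have hA1 : Alike [a, b, c] R2 := (List.isChain_cons_cons.mp hchain).1
    have hA2 : Alike R2 [c, b, a] := (List.isChain_cons_cons.mp (List.isChain_cons_cons.mp hchain).2).1
    exfalso
    rcases alike_three hA1 with rfl | rfl <;>
      rcases alike_three hA2 with h | h <;>
      simp [hab, hac, hbc, Ne.symm hab, Ne.symm hac, Ne.symm hbc] at h
  · simp only [List.head?_cons, Option.some.injEq] at hhead
    subst hhead
    have hlast' : R4 = [c, b, a] := by simpa using hlast
    subst hlast'
    have hA1 : Alike [a, b, c] R2 := (List.isChain_cons_cons.mp hchain).1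
    have hA2 : Alike R2 R3 := (List.isChain_cons_cons.mp (List.isChain_cons_cons.mp hchain).2).1
    have hA3 : Alike R3 [c, b, a] :=
      (List.isChain_cons_cons.mp (List.isChain_cons_cons.mp (List.isChain_cons_cons.mp hchain).2).2).1
    rcases alike_three hA1 with rfl | rfl <;> rcases alike_three hA2 with rfl | rfl
    · -- R2 = [b,a,c], R3 = [a,b,c]
      exfalso
      rcases alike_three hA3 with h | h <;>
        simp [hab, hac, hbc, Ne.symm hab, Ne.symm hac, Ne.symm hbc] at h
    · left; rfl
    · right; rfl
    · -- R2 = [a,c,b], R3 = [a,b,c]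
      exfalso
      rcases alike_three hA3 with h | h <;>
        simp [hab, hac, hbc, Ne.symm hab, Ne.symm hac, Ne.symm hbc] at h
  · exfalso
    simp at hlen4
    omega

lemma switchSeq_geo1 {a b c : α} (hab : a ≠ b) (hac : a ≠ c) (hbc : b ≠ c) :
    switchSeq [[a, b, c], [b, a, c], [b, c, a], [c, b, a]] = [s(a, b), s(a, c), s(b, c)] := by
  simp [switchSeq, switchPair?, List.find?, hab, hac, hbc, Ne.symm hab, Ne.symm hac, Ne.symm hbc]

lemma switchSeq_geo2 {a b c : α} (hab : a ≠ b) (hac : a ≠ c) (hbc : b ≠ c) :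
    switchSeq [[a, b, c], [a, c, b], [c, a, b], [c, b, a]] = [s(b, c), s(a, c), s(a, b)] := by
  simp [switchSeq, switchPair?, List.find?, hab, hac, hbc, Ne.symm hab, Ne.symm hac, Ne.symm hbc]

lemma neverConds_geo1 {a b c : α} (hab : a ≠ b) (hac : a ≠ c) (hbc : b ≠ c) :
    NeverConds {a, b, c} {l | l ∈ [[a, b, c], [b, a, c], [b, c, a], [c, b, a]]} =
      {(b, (2 : Fin 3))} := by
  ext ⟨x, k⟩
  fin_cases k <;>
    simp [NeverConds, NeverCond, Prod.ext_iff, hab, hac, hbc,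
      Ne.symm hab, Ne.symm hac, Ne.symm hbc] <;>
    aesop

lemma neverConds_geo2 {a b c : α} (hab : a ≠ b) (hac : a ≠ c) (hbc : b ≠ c) :
    NeverConds {a, b, c} {l | l ∈ [[a, b, c], [a, c, b], [c, a, b], [c, b, a]]} =
      {(b, (0 : Fin 3))} := by
  ext ⟨x, k⟩
  fin_cases k <;>
    simp [NeverConds, NeverCond, Prod.ext_iff, hab, hac, hbc,
      Ne.symm hab, Ne.symm hac, Ne.symm hbc] <;>
    aesop

end Helpers

/-- Let `a,b,c` be distinct, `T ∈ L({a,b,c})` and `𝒜` a geodesic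
on `L({a,b,c})` connecting `abc` and `T`.  Then `T = cba` iff `(a,b)`, `(a,c)`
and `(b,c)` all occur as switching pairs in `S(𝒜)`.  Moreover, if `T = cba`,
then `{R_1,…,R_k}` satisfies a unique never-condition, which is `b N 3` or
`b N 1`, and:
(a) `N({R_1,…,R_k}) = {b N 3}` iff `𝒜 = (abc,bac,bca,cba)` iff
    `S(𝒜) = ((a,b),(a,c),(b,c))`;
(b) `N({R_1,…,R_k}) = {b N 1}` iff `𝒜 = (abc,acb,cab,cba)` iff
    `S(𝒜) = ((b,c),(a,c),(a,b))`. -/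
theorem geodesic_on_triple_dichotomy [DecidableEq α] (a b c : α)
    (hab : a ≠ b) (hac : a ≠ c) (hbc : b ≠ c)
    (T : List α) (hT : IsLinOrd {a, b, c} T)
    (P : List (List α)) (hP : IsGeodesic {a, b, c} P [a, b, c] T) :
    (T = [c, b, a] ↔
        (s(a, b) ∈ switchSeq P ∧ s(a, c) ∈ switchSeq P ∧ s(b, c) ∈ switchSeq P)) ∧
      (T = [c, b, a] →
        (NeverConds {a, b, c} {l | l ∈ P} = {(b, (2 : Fin 3))} ∨
            NeverConds {a, b, c} {l | l ∈ P} = {(b, (0 : Fin 3))}) ∧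
          ((NeverConds {a, b, c} {l | l ∈ P} = {(b, (2 : Fin 3))} ↔
              P = [[a, b, c], [b, a, c], [b, c, a], [c, b, a]]) ∧
            (NeverConds {a, b, c} {l | l ∈ P} = {(b, (2 : Fin 3))} ↔
              switchSeq P = [s(a, b), s(a, c), s(b, c)])) ∧
          ((NeverConds {a, b, c} {l | l ∈ P} = {(b, (0 : Fin 3))} ↔
              P = [[a, b, c], [a, c, b], [c, a, b], [c, b, a]]) ∧
            (NeverConds {a, b, c} {l | l ∈ P} = {(b, (0 : Fin 3))} ↔
              switchSeq P = [s(b, c), s(a, c), s(a, b)]))) := by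
  have d1 : s(a, b) ≠ s(a, c) := by
    simp [Sym2.eq_iff, hab, hac, hbc, Ne.symm hab, Ne.symm hac, Ne.symm hbc]
  have d2 : s(a, b) ≠ s(b, c) := by
    simp [Sym2.eq_iff, hab, hac, hbc, Ne.symm hab, Ne.symm hac, Ne.symm hbc]
  have d3 : s(a, c) ≠ s(b, c) := by
    simp [Sym2.eq_iff, hab, hac, hbc, Ne.symm hab, Ne.symm hac, Ne.symm hbc]
  have hNe : ({(b, (2 : Fin 3))} : Set (α × Fin 3)) ≠ {(b, (0 : Fin 3))} := by
    intro h
    rw [Set.singleton_eq_singleton_iff, Prod.ext_iff] at h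
    have h2 : (2 : Fin 3) = 0 := h.2
    exact absurd h2 (by decide)
  constructor
  · constructor
    · rintro rfl
      rcases geodesic_cba hab hac hbc hP with rfl | rfl
      · rw [switchSeq_geo1 hab hac hbc]
        refine ⟨by simp, by simp, by simp⟩
      · rw [switchSeq_geo2 hab hac hbc]
        refine ⟨by simp, by simp, by simp⟩
    · rintro ⟨h1, h2, h3⟩
      by_contra hTne
      obtain ⟨Q, hQ, hQlen⟩ := isPath_short hab hac hbc hT hTne
      have hPlen : P.length ≤ 3 := le_trans (hP.2 Q hQ) hQlen
      have hslen : (switchSeq P).length ≤ 2 := by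
        have h4 : (switchSeq P).length ≤ (P.zip P.tail).length :=
          List.length_filterMap_le _ _
        rw [List.length_zip, List.length_tail] at h4
        omega
      have hsub : ({s(a, b), s(a, c), s(b, c)} : Finset (Sym2 α)) ⊆ (switchSeq P).toFinset := by
        intro p hp
        simp only [Finset.mem_insert, Finset.mem_singleton] at hp
        rw [List.mem_toFinset]
        rcases hp with rfl | rfl | rfl
        exacts [h1, h2, h3]
      have hcard : ({s(a, b), s(a, c), s(b, c)} : Finset (Sym2 α)).card = 3 := by
        rw [Finset.card_insert_of_notMem (by simp [d1, d2]),
            Finset.card_insert_of_notMem (by simp [d3]), Finset.card_singleton]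
      have h5 := Finset.card_le_card hsub
      have h6 := (switchSeq P).toFinset_card_le
      omega
  · rintro rfl
    rcases geodesic_cba hab hac hbc hP with rfl | rfl
    · have hN := neverConds_geo1 hab hac hbc
      have hS := switchSeq_geo1 hab hac hbc
      refine ⟨Or.inl hN, ⟨iff_of_true hN rfl, iff_of_true hN hS⟩, ?_, ?_⟩
      · refine iff_of_false (by rw [hN]; exact hNe) ?_
        intro h
        have := congrArg (fun (l : List (List α)) => l[1]?) h
        simp [hab, hac, hbc, Ne.symm hab, Ne.symm hac, Ne.symm hbc] at this
      · refine iff_of_false (by rw [hN]; exact hNe) ?_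
        rw [hS]
        intro h
        simp [Sym2.eq_iff, hab, hac, hbc, Ne.symm hab, Ne.symm hac, Ne.symm hbc] at h
    · have hN := neverConds_geo2 hab hac hbc
      have hS := switchSeq_geo2 hab hac hbc
      refine ⟨Or.inr hN, ⟨?_, ?_⟩, ⟨iff_of_true hN rfl, iff_of_true hN hS⟩⟩
      · refine iff_of_false (by rw [hN]; exact hNe.symm) ?_
        intro h
        have := congrArg (fun (l : List (List α)) => l[1]?) h
        simp [hab, hac, hbc, Ne.symm hab, Ne.symm hac, Ne.symm hbc] at this
      · refine iff_of_false (by rw [hN]; exact hNe.symm) ?_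
        rw [hS]
        intro h
        simp [Sym2.eq_iff, hab, hac, hbc, Ne.symm hab, Ne.symm hac, Ne.symm hbc] at h
end

section
/- Any switching pair of alternatives in a geodesic 𝒜 occurs exactly once in S(𝒜); that is, if 𝒜 is a geodesic of alike linear orders, then every unordered pair of alternatives appears at most once as a switching pair in the sequence S(𝒜). -/
/-!
Common definitions for formalizing Condorcet domains.

A linear order on a finite set `A : Finset α` of alternatives is encoded as a
duplicate-free list enumerating the elements of `A` from most preferred (head)
to least preferred (last).
-/

variable {α : Type*}

namespace GeoAux

variable {α : Type*} [DecidableEq α]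

/-- `x` occurs before `y` in `l`. -/
def bef (l : List α) (x y : α) : Prop :=
  x ∈ l ∧ y ∈ l ∧ l.idxOf x < l.idxOf y

instance (l : List α) (x y : α) : Decidable (bef l x y) := by
  unfold bef; infer_instance

lemma bef_asymm {l : List α} {x y : α} (h : bef l x y) : ¬ bef l y x := by
  obtain ⟨-, -, h1⟩ := h
  rintro ⟨-, -, h2⟩
  omega

section Swap

variable {l₁ l₂ : List α} {x y : α}

set_option linter.unusedSectionVars false

lemma swap_facts (hnd : (l₁ ++ x :: y :: l₂).Nodup) :
    x ∉ l₁ ∧ y ∉ l₁ ∧ x ≠ y ∧ x ∉ l₂ ∧ y ∉ l₂ := by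
  simp only [List.nodup_append, List.nodup_cons, List.mem_cons, List.disjoint_left] at hnd
  obtain ⟨-, ⟨hx, hy, -⟩, hd⟩ := hnd
  refine ⟨fun h => hd x h x (by simp) rfl, fun h => hd y h y (by simp) rfl, ?_, ?_, ?_⟩
  · intro h; exact hx (by simp [h])
  · intro h; exact hx (by simp [h])
  · intro h; exact hy h

lemma pos_x (hnd : (l₁ ++ x :: y :: l₂).Nodup) :
    (l₁ ++ x :: y :: l₂).idxOf x = l₁.length := by
  obtain ⟨hx, -, -, -, -⟩ := swap_facts hnd
  rw [List.idxOf_append_of_notMem hx, List.idxOf_cons_self]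
  omega

lemma pos_y (hnd : (l₁ ++ x :: y :: l₂).Nodup) :
    (l₁ ++ x :: y :: l₂).idxOf y = l₁.length + 1 := by
  obtain ⟨-, hy, hxy, -, -⟩ := swap_facts hnd
  rw [List.idxOf_append_of_notMem hy, List.idxOf_cons_ne _ hxy,
    List.idxOf_cons_self]

lemma nodup_swap (hnd : (l₁ ++ x :: y :: l₂).Nodup) : (l₁ ++ y :: x :: l₂).Nodup :=
  ((List.Perm.append_left l₁ (List.Perm.swap x y l₂)).nodup_iff).mpr hnd

lemma mem_swap_iff {c : α} : c ∈ l₁ ++ y :: x :: l₂ ↔ c ∈ l₁ ++ x :: y :: l₂ :=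
  (List.Perm.append_left l₁ (List.Perm.swap x y l₂)).mem_iff

/-- For elements other than `x`, `y`, the index is unchanged by the swap, and
differs from the positions of `x` and `y`. -/
lemma pos_other {c : α} (hnd : (l₁ ++ x :: y :: l₂).Nodup)
    (hc : c ∈ l₁ ++ x :: y :: l₂) (hcx : c ≠ x) (hcy : c ≠ y) :
    (l₁ ++ y :: x :: l₂).idxOf c = (l₁ ++ x :: y :: l₂).idxOf c ∧
      (l₁ ++ x :: y :: l₂).idxOf c ≠ l₁.length ∧
      (l₁ ++ x :: y :: l₂).idxOf c ≠ l₁.length + 1 := by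
  have hx : x ∈ l₁ ++ x :: y :: l₂ := by simp
  have hy : y ∈ l₁ ++ x :: y :: l₂ := by simp
  refine ⟨?_, ?_, ?_⟩
  · by_cases hcl : c ∈ l₁
    · rw [List.idxOf_append_of_mem hcl, List.idxOf_append_of_mem hcl]
    · rw [List.idxOf_append_of_notMem hcl, List.idxOf_append_of_notMem hcl,
        List.idxOf_cons_ne _ (Ne.symm hcx), List.idxOf_cons_ne _ (Ne.symm hcy),
        List.idxOf_cons_ne _ (Ne.symm hcy), List.idxOf_cons_ne _ (Ne.symm hcx)]
  · intro h
    exact hcx ((List.idxOf_inj hc).mp (by rw [h, pos_x hnd]))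
  · intro h
    exact hcy ((List.idxOf_inj hc).mp (by rw [h, pos_y hnd]))

lemma indexOf_swap_lt_iff {a b : α} (hnd : (l₁ ++ x :: y :: l₂).Nodup)
    (ha : a ∈ l₁ ++ x :: y :: l₂) (hb : b ∈ l₁ ++ x :: y :: l₂)
    (hne : ¬ (a = x ∧ b = y)) (hne' : ¬ (a = y ∧ b = x)) :
    (l₁ ++ x :: y :: l₂).idxOf a < (l₁ ++ x :: y :: l₂).idxOf b ↔
      (l₁ ++ y :: x :: l₂).idxOf a < (l₁ ++ y :: x :: l₂).idxOf b := by
  obtain ⟨-, -, hxy, -, -⟩ := swap_facts hnd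
  have hnd' := nodup_swap hnd
  have px := pos_x hnd
  have py := pos_y hnd
  have px' : (l₁ ++ y :: x :: l₂).idxOf y = l₁.length := pos_x hnd'
  have py' : (l₁ ++ y :: x :: l₂).idxOf x = l₁.length + 1 := pos_y hnd'
  rcases eq_or_ne a x with hax | hax
  · rcases eq_or_ne b y with hby | hby
    · exact absurd ⟨hax, hby⟩ hne
    · rcases eq_or_ne b x with hbx | hbx
      · rw [hax, hbx]; simp
      · obtain ⟨hbeq, hb1, hb2⟩ := pos_other hnd hb hbx hby
        rw [hax, px, py', hbeq]; omega
  · rcases eq_or_ne a y with hay | hay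
    · rcases eq_or_ne b x with hbx | hbx
      · exact absurd ⟨hay, hbx⟩ hne'
      · rcases eq_or_ne b y with hby | hby
        · rw [hay, hby]; simp
        · obtain ⟨hbeq, hb1, hb2⟩ := pos_other hnd hb hbx hby
          rw [hay, py, px', hbeq]; omega
    · obtain ⟨haeq, ha1, ha2⟩ := pos_other hnd ha hax hay
      rcases eq_or_ne b x with hbx | hbx
      · rw [hbx, px, py', haeq]; omega
      · rcases eq_or_ne b y with hby | hby
        · rw [hby, py, px', haeq]; omega
        · obtain ⟨hbeq, hb1, hb2⟩ := pos_other hnd hb hbx hby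
          rw [haeq, hbeq]

lemma bef_swap_iff {a b : α} (hnd : (l₁ ++ x :: y :: l₂).Nodup)
    (hne : ¬ (a = x ∧ b = y)) (hne' : ¬ (a = y ∧ b = x)) :
    bef (l₁ ++ x :: y :: l₂) a b ↔ bef (l₁ ++ y :: x :: l₂) a b := by
  constructor
  · rintro ⟨ha, hb, hab⟩
    exact ⟨mem_swap_iff.mpr ha, mem_swap_iff.mpr hb,
      (indexOf_swap_lt_iff hnd ha hb hne hne').mp hab⟩
  · rintro ⟨ha, hb, hab⟩
    have ha' := mem_swap_iff.mp ha
    have hb' := mem_swap_iff.mp hb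
    exact ⟨ha', hb', (indexOf_swap_lt_iff hnd ha' hb' hne hne').mpr hab⟩

lemma bef_xy (hnd : (l₁ ++ x :: y :: l₂).Nodup) : bef (l₁ ++ x :: y :: l₂) x y :=
  ⟨by simp, by simp, by rw [pos_x hnd, pos_y hnd]; omega⟩

end Swap

section Seq

lemma find?_zip_self (l : List α) :
    (l.zip l).find? (fun p => decide (p.1 ≠ p.2)) = none := by
  induction l with
  | nil => rfl
  | cons a l ih =>
    rw [List.zip_cons_cons, List.find?_cons_of_neg (by simp)]
    exact ih

lemma switchPair?_swap {l₁ l₂ : List α} {x y : α} (hxy : x ≠ y) :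
    switchPair? (l₁ ++ x :: y :: l₂) (l₁ ++ y :: x :: l₂) = some (Sym2.mk x y) := by
  unfold switchPair?
  rw [List.zip_append rfl, List.zip_cons_cons, List.find?_append, find?_zip_self,
    List.find?_cons_of_pos (by simpa using hxy)]
  rfl

lemma switchSeq_cons_cons {u v : List α} {rest : List (List α)} {l₁ l₂ : List α} {x y : α}
    (hxy : x ≠ y) (hu : u = l₁ ++ x :: y :: l₂) (hv : v = l₁ ++ y :: x :: l₂) :
    switchSeq (u :: v :: rest) = Sym2.mk x y :: switchSeq (v :: rest) := by
  have hsp : switchPair? u v = some (Sym2.mk x y) := by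
    rw [hu, hv]; exact switchPair?_swap hxy
  simp only [switchSeq, List.tail_cons, List.zip_cons_cons, List.filterMap_cons, hsp]

lemma switchSeq_length : ∀ (Q : List (List α)), Q.Chain' Alike →
    (switchSeq Q).length = Q.length - 1
  | [] => fun _ => rfl
  | [u] => fun _ => rfl
  | u :: v :: rest => fun hch => by
    obtain ⟨h1, h2⟩ := List.isChain_cons_cons.mp hch
    obtain ⟨l₁, l₂, x, y, hxy, hu, hv⟩ := h1
    rw [switchSeq_cons_cons hxy hu hv]
    have := switchSeq_length (v :: rest) h2
    simp only [List.length_cons] at *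
    omega

lemma bef_eq_of_not_mem_switchSeq : ∀ (Q : List (List α)) (l m : List α),
    Q.Chain' Alike → (∀ u ∈ Q, u.Nodup) → Q.head? = some l → Q.getLast? = some m →
    ∀ a b : α, Sym2.mk a b ∉ switchSeq Q → (bef l a b ↔ bef m a b)
  | [], l, m => fun _ _ h => by simp at h
  | [u], l, m => fun _ _ hh hl a b _ => by
    simp only [List.head?_cons, Option.some.injEq] at hh
    simp only [List.getLast?_singleton, Option.some.injEq] at hl
    rw [← hh, ← hl]
  | u :: v :: rest, l, m => fun hch hnd hh hl a b hmem => by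
    obtain ⟨h1, h2⟩ := List.isChain_cons_cons.mp hch
    obtain ⟨l₁, l₂, x, y, hxy, hu, hv⟩ := h1
    rw [switchSeq_cons_cons hxy hu hv, List.mem_cons] at hmem
    push_neg at hmem
    obtain ⟨hmem1, hmem2⟩ := hmem
    have hne1 : ¬ (a = x ∧ b = y) := by
      rintro ⟨ha, hb⟩
      exact hmem1 (by rw [ha, hb])
    have hne2 : ¬ (a = y ∧ b = x) := by
      rintro ⟨ha, hb⟩
      refine hmem1 ?_
      rw [ha, hb]
      exact Sym2.eq_swap
    have hund : u.Nodup := hnd u (by simp)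
    have hstep : bef u a b ↔ bef v a b := by
      rw [hu, hv]
      exact bef_swap_iff (hu ▸ hund) hne1 hne2
    have hl' : (v :: rest).getLast? = some m := by
      rwa [List.getLast?_cons_cons] at hl
    have ih := bef_eq_of_not_mem_switchSeq (v :: rest) v m h2
      (fun w hw => hnd w (List.mem_cons_of_mem _ hw)) rfl hl' a b hmem2
    simp only [List.head?_cons, Option.some.injEq] at hh
    rw [← hh]
    exact hstep.trans ih

end Seq

/-- The set of inverted (ordered) pairs between two lists. -/
def inv (R T : List α) : Finset (α × α) :=
  (R.toFinset ×ˢ R.toFinset).filter (fun p => bef R p.1 p.2 ∧ bef T p.2 p.1)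

lemma mem_inv {R T : List α} {a b : α} :
    (a, b) ∈ inv R T ↔ bef R a b ∧ bef T b a := by
  constructor
  · intro h
    exact (Finset.mem_filter.mp h).2
  · intro h
    refine Finset.mem_filter.mpr ⟨Finset.mem_product.mpr ⟨?_, ?_⟩, h⟩
    · exact List.mem_toFinset.mpr h.1.1
    · exact List.mem_toFinset.mpr h.1.2.1

lemma inv_swap {l₁ l₂ : List α} {x y : α} {T : List α}
    (hnd : (l₁ ++ x :: y :: l₂).Nodup) (hT : bef T y x) :
    inv (l₁ ++ y :: x :: l₂) T = (inv (l₁ ++ x :: y :: l₂) T).erase (x, y) := by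
  have hnd' := nodup_swap hnd
  ext ⟨a, b⟩
  rw [Finset.mem_erase, mem_inv, mem_inv]
  by_cases h1 : a = x ∧ b = y
  · rw [h1.1, h1.2]
    constructor
    · rintro ⟨hc, -⟩
      exact absurd hc (bef_asymm (bef_xy hnd'))
    · rintro ⟨hne, -⟩
      exact absurd rfl hne
  · by_cases h2 : a = y ∧ b = x
    · rw [h2.1, h2.2]
      constructor
      · rintro ⟨-, hc⟩
        exact absurd hT (bef_asymm hc)
      · rintro ⟨-, hc, -⟩
        exact absurd hc (bef_asymm (bef_xy hnd))
    · have hiff := bef_swap_iff hnd h1 h2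
      have hne : (a, b) ≠ (x, y) := by
        intro h
        exact h1 ⟨congrArg Prod.fst h, congrArg Prod.snd h⟩
      rw [← hiff]
      simp [hne]

lemma xy_mem_inv {l₁ l₂ : List α} {x y : α} {T : List α}
    (hnd : (l₁ ++ x :: y :: l₂).Nodup) (hT : bef T y x) :
    (x, y) ∈ inv (l₁ ++ x :: y :: l₂) T := mem_inv.mpr ⟨bef_xy hnd, hT⟩

lemma exists_adjacent_inverted {A : Finset α} {R T : List α}
    (hR : IsLinOrd A R) (hT : IsLinOrd A T) (hne : R ≠ T) :
    ∃ (l₁ l₂ : List α) (x y : α), x ≠ y ∧ R = l₁ ++ x :: y :: l₂ ∧ bef T y x := by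
  obtain ⟨hRnd, hRA⟩ := hR
  obtain ⟨hTnd, hTA⟩ := hT
  have hlen : R.length = T.length := by
    rw [← List.toFinset_card_of_nodup hRnd, ← List.toFinset_card_of_nodup hTnd, hRA, hTA]
  have hex : ∃ i : ℕ, R[i]? ≠ T[i]? := by
    by_contra h
    push_neg at h
    exact hne (List.ext_getElem? h)
  set i := Nat.find hex with hidef
  have hi : R[i]? ≠ T[i]? := Nat.find_spec hex
  have hlt : ∀ k < i, R[k]? = T[k]? := fun k hk => not_not.mp (Nat.find_min hex hk)
  have hiR : i < R.length := by
    by_contra h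
    push_neg at h
    rw [List.getElem?_eq_none h, List.getElem?_eq_none (by omega)] at hi
    exact hi rfl
  have hiT : i < T.length := by omega
  set t := T[i] with ht
  have htmem : t ∈ R := by
    rw [← List.mem_toFinset, hRA, ← hTA, List.mem_toFinset]
    exact List.getElem_mem hiT
  set j := R.idxOf t with hjdef
  have hjR : j < R.length := List.idxOf_lt_length_iff.mpr htmem
  have hRj : R[j] = t := List.getElem_idxOf hjR
  have hTi : T.idxOf t = i := by rw [ht]; exact hTnd.idxOf_getElem i hiT
  have hij : i < j := by
    rcases lt_trichotomy j i with h | h | h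
    · exfalso
      have h2 := hlt j h
      rw [List.getElem?_eq_getElem hjR, List.getElem?_eq_getElem (by omega)] at h2
      injection h2 with h3
      have h4 : T[j]'(by omega) = T[i] := by rw [← h3, hRj, ht]
      have := (hTnd.getElem_inj_iff).mp h4
      omega
    · exfalso
      apply hi
      rw [List.getElem?_eq_getElem hiR, List.getElem?_eq_getElem hiT]
      have h4 : R[i]'hiR = R[j]'hjR := by
        congr 1
        omega
      rw [h4, hRj, ht]
    · exact h
  have hj1 : j - 1 < R.length := by omega
  set z := R[j - 1] with hz
  have hzx : z ≠ t := by
    intro h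
    have he : R[j - 1]'hj1 = R[j]'hjR := by rw [← hz, h, hRj]
    have := (hRnd.getElem_inj_iff).mp he
    omega
  have hdec : R = R.take (j - 1) ++ z :: t :: R.drop (j + 1) := by
    conv_lhs => rw [← List.take_append_drop (j - 1) R]
    congr 1
    rw [List.drop_eq_getElem_cons hj1, ← hz]
    congr 1
    have hj2 : j - 1 + 1 = j := by omega
    rw [hj2, List.drop_eq_getElem_cons hjR, hRj]
  have hzT : z ∈ T := by
    rw [← List.mem_toFinset, hTA, ← hRA, List.mem_toFinset, hz]
    exact List.getElem_mem hj1
  have htT : t ∈ T := by rw [ht]; exact List.getElem_mem hiT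
  set m := T.idxOf z with hm
  have hmT : m < T.length := List.idxOf_lt_length_iff.mpr hzT
  have hTm : T[m] = z := List.getElem_idxOf hmT
  have hmi : m ≠ i := by
    intro h
    apply hzx
    rw [← hTm, ht]
    simp only [h]
  have hmgt : i < m := by
    rcases lt_or_gt_of_ne hmi with h | h
    · exfalso
      have h2 := hlt m h
      rw [List.getElem?_eq_getElem (by omega), List.getElem?_eq_getElem hmT] at h2
      injection h2 with h3
      have h4 : R[m]'(by omega) = R[j - 1]'hj1 := by rw [h3, hTm, hz]
      have := (hRnd.getElem_inj_iff).mp h4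
      omega
    · exact h
  exact ⟨R.take (j - 1), R.drop (j + 1), z, t, hzx, hdec, htT, hzT, by rw [hTi, ← hm]; exact hmgt⟩

lemma perm_toFinset {l l' : List α} (h : List.Perm l l') : l.toFinset = l'.toFinset := by
  ext a
  simp [List.mem_toFinset, h.mem_iff]

lemma isPath_singleton {A : Finset α} {R : List α} (hR : IsLinOrd A R) :
    IsPath A [R] R R :=
  ⟨⟨by simp, by simpa, List.isChain_singleton R⟩, rfl, rfl⟩

lemma exists_short_path {A : Finset α} {T : List α} (hT : IsLinOrd A T) :
    ∀ (n : ℕ) (R : List α), (inv R T).card ≤ n → IsLinOrd A R →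
    ∃ Q : List (List α), IsPath A Q R T ∧ Q.length ≤ n + 1 := by
  intro n
  induction n with
  | zero =>
    intro R hcard hR
    by_cases h : R = T
    · subst h
      exact ⟨[R], isPath_singleton hR, by simp⟩
    · exfalso
      obtain ⟨l₁, l₂, x, y, hxy, hdec, hTyx⟩ := exists_adjacent_inverted hR hT h
      have hmem : (x, y) ∈ inv R T := by
        rw [hdec]
        exact xy_mem_inv (hdec ▸ hR.1) hTyx
      have := Finset.card_pos.mpr ⟨(x, y), hmem⟩
      omega
  | succ n ih =>
    intro R hcard hR
    by_cases h : R = T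
    · subst h
      exact ⟨[R], isPath_singleton hR, by simp⟩
    · obtain ⟨l₁, l₂, x, y, hxy, hdec, hTyx⟩ := exists_adjacent_inverted hR hT h
      have hnd : (l₁ ++ x :: y :: l₂).Nodup := hdec ▸ hR.1
      set R' := l₁ ++ y :: x :: l₂ with hR'def
      have hperm : List.Perm R' (l₁ ++ x :: y :: l₂) :=
        List.Perm.append_left l₁ (List.Perm.swap x y l₂)
      have hR' : IsLinOrd A R' := by
        constructor
        · exact nodup_swap hnd
        · rw [perm_toFinset hperm, ← hdec]
          exact hR.2
      have hmem : (x, y) ∈ inv R T := by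
        rw [hdec]
        exact xy_mem_inv hnd hTyx
      have hcard' : (inv R' T).card ≤ n := by
        rw [hR'def, inv_swap hnd hTyx, ← hdec, Finset.card_erase_of_mem hmem]
        have := Finset.card_pos.mpr ⟨(x, y), hmem⟩
        omega
      obtain ⟨Q', hQ', hlen'⟩ := ih R' hcard' hR'
      obtain ⟨⟨hne', hmem', hch'⟩, hh', hl'⟩ := hQ'
      cases Q' with
      | nil => exact absurd rfl hne'
      | cons q rest =>
        have hq : q = R' := by
          simp only [List.head?_cons, Option.some.injEq] at hh'
          exact hh'
        subst hq
        refine ⟨R :: R' :: rest, ⟨⟨by simp, ?_, ?_⟩, rfl, ?_⟩, ?_⟩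
        · rintro l hl
          rcases List.mem_cons.mp hl with rfl | hl
          · exact hR
          · exact hmem' _ hl
        · refine List.isChain_cons_cons.mpr ⟨⟨l₁, l₂, x, y, hxy, hdec, rfl⟩, hch'⟩
        · rw [List.getLast?_cons_cons]
          exact hl'
        · simp only [List.length_cons] at *
          omega

end GeoAux

/-- Any switching pair of alternatives of a geodesic occurs
exactly once in it: every unordered pair of alternatives appears at most once
as a switching pair in the sequence `S(𝒜)` of a geodesic `𝒜`. -/
theorem geodesic_switchPair_count_le_one [DecidableEq α] (A : Finset α)
    (P : List (List α)) (R T : List α) (hP : IsGeodesic A P R T) :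
    ∀ p : Sym2 α, (switchSeq P).count p ≤ 1 := by
  classical
  obtain ⟨⟨⟨hne, hmem, hch⟩, hh, hl⟩, hmin⟩ := hP
  have hR : IsLinOrd A R := hmem R (List.mem_of_mem_head? (Option.mem_def.mpr hh))
  have hT : IsLinOrd A T := hmem T (List.mem_of_mem_getLast? (Option.mem_def.mpr hl))
  obtain ⟨Q, hQ, hQlen⟩ := GeoAux.exists_short_path hT (GeoAux.inv R T).card R le_rfl hR
  have hPQ := hmin Q hQ
  have hlenP : (switchSeq P).length = P.length - 1 := GeoAux.switchSeq_length P hch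
  have hP1 : 1 ≤ P.length := List.length_pos_iff.mpr hne
  have hn : (switchSeq P).length ≤ (GeoAux.inv R T).card := by omega
  set t := (switchSeq P).toFinset with htdef
  set I := (GeoAux.inv R T).image (fun p => Sym2.mk p.1 p.2) with hIdef
  have hinj : Set.InjOn (fun p : α × α => Sym2.mk p.1 p.2) ↑(GeoAux.inv R T) := by
    rintro ⟨a, b⟩ ha ⟨c, d⟩ hc hcd
    simp only [Finset.mem_coe] at ha hc
    simp only at hcd
    rcases Sym2.eq_iff.mp hcd with ⟨h1, h2⟩ | ⟨h1, h2⟩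
    · rw [h1, h2]
    · exfalso
      have hb1 := (GeoAux.mem_inv.mp ha).1
      have hb2 := (GeoAux.mem_inv.mp hc).1
      rw [← h1, ← h2] at hb2
      exact GeoAux.bef_asymm hb1 hb2
  have hIcard : I.card = (GeoAux.inv R T).card := Finset.card_image_of_injOn hinj
  have hndall : ∀ u ∈ P, u.Nodup := fun u hu => (hmem u hu).1
  have hcount1 : ∀ q ∈ I, 1 ≤ (switchSeq P).count q := by
    intro q hq
    obtain ⟨⟨a, b⟩, hab, rfl⟩ := Finset.mem_image.mp hq
    obtain ⟨hRab, hTba⟩ := GeoAux.mem_inv.mp hab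
    by_contra hc
    push_neg at hc
    have h0 : Sym2.mk a b ∉ switchSeq P := List.count_eq_zero.mp
      (by have hc' : (switchSeq P).count (Sym2.mk a b) < 1 := hc; omega)
    have hiff := GeoAux.bef_eq_of_not_mem_switchSeq P R T hch hndall hh hl a b h0
    exact GeoAux.bef_asymm hTba (hiff.mp hRab)
  have hsub : I ⊆ t := by
    intro q hq
    rw [htdef, List.mem_toFinset]
    have := hcount1 q hq
    exact List.count_pos_iff.mp (by omega)
  have hsum : ∑ q ∈ t, (switchSeq P).count q = (switchSeq P).length :=
    List.sum_toFinset_count_eq_length _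
  have h1 : t.card ≤ ∑ q ∈ t, (switchSeq P).count q := by
    have := Finset.card_nsmul_le_sum t (fun q => (switchSeq P).count q) 1
      (fun q hq => List.count_pos_iff.mpr (List.mem_toFinset.mp hq))
    simpa using this
  have h2 : (GeoAux.inv R T).card ≤ t.card := by
    rw [← hIcard]
    exact Finset.card_le_card hsub
  intro p
  by_cases hp : p ∈ t
  · by_contra hc
    push_neg at hc
    have hstrict : ∑ _q ∈ t, 1 < ∑ q ∈ t, (switchSeq P).count q :=
      Finset.sum_lt_sum (fun q hq => List.count_pos_iff.mpr (List.mem_toFinset.mp hq))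
        ⟨p, hp, by omega⟩
    rw [Finset.sum_const, smul_eq_mul, mul_one] at hstrict
    omega
  · have h0 : (switchSeq P).count p = 0 :=
      List.count_eq_zero.mpr (fun h => hp (List.mem_toFinset.mpr h))
    omega
end

section
/- Let 𝒜 = (R_1,…,R_k) be a geodesic of alike linear orders on L(A) and let B ⊆ A. Then the restricted path 𝒜_B is a geodesic on L(B). -/
/-!
Common definitions for formalizing Condorcet domains.

A linear order on a finite set `A : Finset α` of alternatives is encoded as a
duplicate-free list enumerating the elements of `A` from most preferred (head)
to least preferred (last).
-/

variable {α : Type*}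

namespace CondorcetAux

open List

variable [DecidableEq α]

set_option linter.unusedSectionVars false

/-- number of discordant (ordered, normalized) pairs -/
def invCount (R T : List α) : ℕ :=
  ((R.toFinset ×ˢ R.toFinset).filter
    (fun p => R.idxOf p.1 < R.idxOf p.2 ∧ T.idxOf p.2 < T.idxOf p.1)).card

lemma invCount_self (T : List α) : invCount T T = 0 := by
  rw [invCount, Finset.card_eq_zero, Finset.filter_eq_empty_iff]
  rintro ⟨a, b⟩ _ ⟨h1, h2⟩
  exact absurd (h1.trans h2) (lt_irrefl _)

/-- index computation in both `l₁ ++ x :: y :: l₂` and `l₁ ++ y :: x :: l₂` -/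
lemma idx_both (l₁ l₂ : List α) (x y a : α) (h : (l₁ ++ x :: y :: l₂).Nodup) :
    (a ∈ l₁ ∧ (l₁ ++ x :: y :: l₂).idxOf a = l₁.idxOf a ∧
      (l₁ ++ y :: x :: l₂).idxOf a = l₁.idxOf a ∧ l₁.idxOf a < l₁.length)
    ∨ (a = x ∧ (l₁ ++ x :: y :: l₂).idxOf a = l₁.length ∧
        (l₁ ++ y :: x :: l₂).idxOf a = l₁.length + 1)
    ∨ (a = y ∧ (l₁ ++ x :: y :: l₂).idxOf a = l₁.length + 1 ∧
        (l₁ ++ y :: x :: l₂).idxOf a = l₁.length)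
    ∨ ((a ∉ l₁ ∧ a ≠ x ∧ a ≠ y) ∧ l₁.length + 2 ≤ (l₁ ++ x :: y :: l₂).idxOf a ∧
        (l₁ ++ y :: x :: l₂).idxOf a = (l₁ ++ x :: y :: l₂).idxOf a) := by
  have hxy : x ≠ y := by
    have := h.sublist (List.sublist_append_right l₁ _)
    simp at this; tauto
  by_cases h1 : a ∈ l₁
  · exact Or.inl ⟨h1, List.idxOf_append_of_mem h1, List.idxOf_append_of_mem h1,
      List.idxOf_lt_length_iff.2 h1⟩
  rw [List.idxOf_append_of_notMem h1, List.idxOf_append_of_notMem h1]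
  by_cases hx : a = x
  · subst hx
    refine Or.inr (Or.inl ⟨rfl, by simp, ?_⟩)
    rw [List.idxOf_cons_ne _ (Ne.symm hxy), List.idxOf_cons_self]
  by_cases hy : a = y
  · subst hy
    refine Or.inr (Or.inr (Or.inl ⟨rfl, ?_, by simp⟩))
    rw [List.idxOf_cons_ne _ hxy, List.idxOf_cons_self]
  · refine Or.inr (Or.inr (Or.inr ⟨⟨h1, hx, hy⟩, ?_, ?_⟩))
    · rw [List.idxOf_cons_ne _ (Ne.symm (by simpa using hx)),
        List.idxOf_cons_ne _ (Ne.symm (by simpa using hy))]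
      omega
    · rw [List.idxOf_cons_ne _ (Ne.symm (by simpa using hy)),
        List.idxOf_cons_ne _ (Ne.symm (by simpa using hx)),
        List.idxOf_cons_ne _ (Ne.symm (by simpa using hx)),
        List.idxOf_cons_ne _ (Ne.symm (by simpa using hy))]

lemma swap_perm (l₁ l₂ : List α) (x y : α) :
    (l₁ ++ x :: y :: l₂).Perm (l₁ ++ y :: x :: l₂) :=
  List.Perm.append_left l₁ (List.Perm.swap y x l₂)

lemma swap_nodup {l₁ l₂ : List α} {x y : α} (h : (l₁ ++ x :: y :: l₂).Nodup) :
    (l₁ ++ y :: x :: l₂).Nodup := ((swap_perm l₁ l₂ x y).nodup_iff).1 h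

lemma swap_toFinset (l₁ l₂ : List α) (x y : α) :
    (l₁ ++ y :: x :: l₂).toFinset = (l₁ ++ x :: y :: l₂).toFinset :=
  List.toFinset_eq_of_perm _ _ (swap_perm l₁ l₂ x y).symm

/-- swapping adjacent x,y preserves relative order of all other pairs -/
lemma swap_idx_iff {l₁ l₂ : List α} {x y : α} (h : (l₁ ++ x :: y :: l₂).Nodup)
    (a b : α) (hab : ¬(a = x ∧ b = y)) (hba : ¬(a = y ∧ b = x)) :
    ((l₁ ++ x :: y :: l₂).idxOf a < (l₁ ++ x :: y :: l₂).idxOf b ↔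
      (l₁ ++ y :: x :: l₂).idxOf a < (l₁ ++ y :: x :: l₂).idxOf b) := by
  have Ha := idx_both l₁ l₂ x y a h
  have Hb := idx_both l₁ l₂ x y b h
  rcases Ha with ⟨m, e, f, lt⟩ | ⟨rfl, e, f⟩ | ⟨rfl, e, f⟩ | ⟨⟨m1, m2, m3⟩, e, f⟩ <;>
  rcases Hb with ⟨m', e', f', lt'⟩ | ⟨hh, e', f'⟩ | ⟨hh, e', f'⟩ | ⟨⟨m1', m2', m3'⟩, e', f'⟩ <;>
    first
      | (exfalso; exact hab ⟨rfl, hh⟩)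
      | (exfalso; exact hba ⟨rfl, hh⟩)
      | omega

lemma nodup_facts {l₁ l₂ : List α} {x y : α} (h : (l₁ ++ x :: y :: l₂).Nodup) :
    x ≠ y ∧ x ∉ l₁ ∧ y ∉ l₁ := by
  rw [List.nodup_append] at h
  obtain ⟨-, h2, h3⟩ := h
  simp only [List.nodup_cons, List.mem_cons] at h2
  refine ⟨?_, ?_, ?_⟩
  · rintro rfl; simp at h2
  · intro hm; exact h3 x hm x (by simp) rfl
  · intro hm; exact h3 y hm y (by simp) rfl

lemma idxR_x {l₁ l₂ : List α} {x y : α} (h : (l₁ ++ x :: y :: l₂).Nodup) :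
    (l₁ ++ x :: y :: l₂).idxOf x = l₁.length := by
  rw [List.idxOf_append_of_notMem (nodup_facts h).2.1, List.idxOf_cons_self]
  omega

lemma idxR_y {l₁ l₂ : List α} {x y : α} (h : (l₁ ++ x :: y :: l₂).Nodup) :
    (l₁ ++ x :: y :: l₂).idxOf y = l₁.length + 1 := by
  rw [List.idxOf_append_of_notMem (nodup_facts h).2.2,
    List.idxOf_cons_ne _ (nodup_facts h).1, List.idxOf_cons_self]

/-- the exact step: swapping a discordant pair into agreement drops `invCount` by 1 -/
lemma invCount_swap_lt {l₁ l₂ : List α} {x y : α} {T : List α}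
    (h : (l₁ ++ x :: y :: l₂).Nodup) (hT : T.idxOf y < T.idxOf x) :
    invCount (l₁ ++ x :: y :: l₂) T = invCount (l₁ ++ y :: x :: l₂) T + 1 := by
  classical
  set R := l₁ ++ x :: y :: l₂ with hR
  set R' := l₁ ++ y :: x :: l₂ with hR'
  have hxy : x ≠ y := (nodup_facts h).1
  have memR' : ∀ a, a ∈ R'.toFinset ↔ a ∈ R.toFinset := by
    intro a; rw [swap_toFinset]
  have hxR : x ∈ R.toFinset := by simp [hR]
  have hyR : y ∈ R.toFinset := by simp [hR]
  have hix : R.idxOf x = l₁.length := idxR_x h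
  have hiy : R.idxOf y = l₁.length + 1 := idxR_y h
  have hix' : R'.idxOf x = l₁.length + 1 := idxR_y (l₁ := l₁) (swap_nodup h)
  have hiy' : R'.idxOf y = l₁.length := idxR_x (swap_nodup h)
  have key : ((R.toFinset ×ˢ R.toFinset).filter
      (fun p => R.idxOf p.1 < R.idxOf p.2 ∧ T.idxOf p.2 < T.idxOf p.1))
      = insert (x, y) ((R'.toFinset ×ˢ R'.toFinset).filter
        (fun p => R'.idxOf p.1 < R'.idxOf p.2 ∧ T.idxOf p.2 < T.idxOf p.1)) := by
    ext ⟨a, b⟩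
    simp only [Finset.mem_filter, Finset.mem_insert, Finset.mem_product, Prod.mk.injEq, memR']
    constructor
    · rintro ⟨⟨ha, hb⟩, h1, h2⟩
      by_cases hc : a = x ∧ b = y
      · exact Or.inl hc
      · refine Or.inr ⟨⟨ha, hb⟩, ?_, h2⟩
        have hba : ¬(a = y ∧ b = x) := by
          rintro ⟨rfl, rfl⟩; omega
        exact (swap_idx_iff h a b hc hba).1 h1
    · rintro (⟨rfl, rfl⟩ | ⟨⟨ha, hb⟩, h1, h2⟩)
      · exact ⟨⟨hxR, hyR⟩, by omega, hT⟩
      · have hc : ¬(a = x ∧ b = y) := by rintro ⟨rfl, rfl⟩; omega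
        have hba : ¬(a = y ∧ b = x) := by rintro ⟨rfl, rfl⟩; omega
        exact ⟨⟨ha, hb⟩, (swap_idx_iff h a b hc hba).2 h1, h2⟩
  have hnot : (x, y) ∉ ((R'.toFinset ×ˢ R'.toFinset).filter
      (fun p => R'.idxOf p.1 < R'.idxOf p.2 ∧ T.idxOf p.2 < T.idxOf p.1)) := by
    simp only [Finset.mem_filter, not_and]
    intro _ h1
    omega
  rw [invCount, key, Finset.card_insert_of_notMem hnot, invCount]

/-- one alike step changes `invCount` to T by exactly one -/
lemma invCount_step {l₁ l₂ : List α} {x y : α} {T : List α}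
    (h : (l₁ ++ x :: y :: l₂).Nodup) (hTnd : T.Nodup)
    (hTF : T.toFinset = (l₁ ++ x :: y :: l₂).toFinset) :
    invCount (l₁ ++ x :: y :: l₂) T = invCount (l₁ ++ y :: x :: l₂) T + 1 ∨
    invCount (l₁ ++ y :: x :: l₂) T = invCount (l₁ ++ x :: y :: l₂) T + 1 := by
  have hxy : x ≠ y := (nodup_facts h).1
  have hxT : x ∈ T := by
    rw [← List.mem_toFinset, hTF]; simp
  have hyT : y ∈ T := by
    rw [← List.mem_toFinset, hTF]; simp
  have hne : T.idxOf x ≠ T.idxOf y := fun hEq => hxy ((List.idxOf_inj hxT).1 hEq)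
  rcases lt_or_gt_of_ne hne with hlt | hgt
  · right
    exact invCount_swap_lt (swap_nodup h) hlt
  · left
    exact invCount_swap_lt h hgt

lemma pairwise_idx {l : List α} (hl : l.Nodup) :
    l.Pairwise (fun u v => l.idxOf u < l.idxOf v) := by
  rw [List.pairwise_iff_getElem]
  intro i j hi hj hij
  rw [List.Nodup.idxOf_getElem hl i hi, List.Nodup.idxOf_getElem hl j hj]
  exact hij

lemma idx_lt_of_pairwise {l : List α} {r : α → α → Prop} (hp : l.Pairwise r)
    {a b : α} (ha : a ∈ l) (hb : b ∈ l) (hab : l.idxOf a < l.idxOf b) : r a b := by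
  have hia := List.idxOf_lt_length_iff.2 ha
  have hib := List.idxOf_lt_length_iff.2 hb
  have := List.pairwise_iff_getElem.1 hp (l.idxOf a) (l.idxOf b) hia hib hab
  rwa [List.getElem_idxOf hia, List.getElem_idxOf hib] at this

/-- sublists of duplicate-free lists preserve relative order -/
lemma sublist_idx_lt {l' l : List α} (hs : l' <+ l) (hl : l.Nodup)
    {a b : α} (ha : a ∈ l') (hb : b ∈ l') (h : l.idxOf a < l.idxOf b) :
    l'.idxOf a < l'.idxOf b := by
  have hl' : l'.Nodup := hl.sublist hs
  have hp : l'.Pairwise (fun u v => l.idxOf u < l.idxOf v) :=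
    (pairwise_idx hl).sublist hs
  have hne : a ≠ b := fun hEq => by subst hEq; omega
  have hne' : l'.idxOf a ≠ l'.idxOf b := fun hEq => hne ((List.idxOf_inj ha).1 hEq)
  rcases lt_or_gt_of_ne hne' with hlt | hgt
  · exact hlt
  · exact absurd (idx_lt_of_pairwise hp hb ha hgt) (by omega)

/-- linear orders with no discordant pairs are equal -/
lemma eq_of_invCount_zero {A : Finset α} {R T : List α}
    (hR : IsLinOrd A R) (hT : IsLinOrd A T) (h : invCount R T = 0) : R = T := by
  set r : α → α → Prop := fun u v => T.idxOf u < T.idxOf v with hr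
  haveI : Std.Antisymm r := ⟨fun u v h1 h2 => absurd (h1.trans h2) (lt_irrefl _)⟩
  have hmem : ∀ a, a ∈ R ↔ a ∈ T := by
    intro a
    rw [← List.mem_toFinset, ← List.mem_toFinset, hR.2, hT.2]
  have hperm : R.Perm T := (List.perm_ext_iff_of_nodup hR.1 hT.1).2 hmem
  rw [invCount, Finset.card_eq_zero, Finset.filter_eq_empty_iff] at h
  have hconc : ∀ a b : α, a ∈ R → b ∈ R → R.idxOf a < R.idxOf b → r a b := by
    intro a b ha hb hab
    have hne : a ≠ b := fun hEq => by subst hEq; omega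
    have h' := @h (a, b) (by simp [Finset.mem_product, ha, hb])
    dsimp only at h'
    simp only [not_and] at h'
    have h2 := h' hab
    have haT : a ∈ T := (hmem a).1 ha
    have hbT : b ∈ T := (hmem b).1 hb
    have : T.idxOf a ≠ T.idxOf b := fun hEq => hne ((List.idxOf_inj haT).1 hEq)
    simp only [hr]
    omega
  have hsR : R.Pairwise r := by
    rw [List.pairwise_iff_getElem]
    intro i j hi hj hij
    refine hconc _ _ (List.getElem_mem hi) (List.getElem_mem hj) ?_
    rw [List.Nodup.idxOf_getElem hR.1 i hi, List.Nodup.idxOf_getElem hR.1 j hj]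
    exact hij
  have hsT : T.Pairwise r := by
    exact (pairwise_idx hT.1).imp (fun h => h)
  exact List.Perm.eq_of_pairwise' hsR hsT hperm

lemma not_chain'_decomp {r : α → α → Prop} :
    ∀ l : List α, ¬ l.Chain' r → ∃ l₁ x y l₂, l = l₁ ++ x :: y :: l₂ ∧ ¬ r x y
  | [], h => absurd List.isChain_nil h
  | [a], h => absurd (List.isChain_singleton a) h
  | a :: b :: l, h => by
    unfold List.Chain' at h
    rw [List.isChain_cons_cons] at h
    by_cases hab : r a b
    · have hnc : ¬ (b :: l).Chain' r := fun hc => h ⟨hab, hc⟩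
      obtain ⟨l₁, x, y, l₂, hEq, hxy⟩ := not_chain'_decomp (b :: l) hnc
      exact ⟨a :: l₁, x, y, l₂, by rw [List.cons_append, hEq], hxy⟩
    · exact ⟨[], a, b, l, rfl, hab⟩

lemma exists_adjacent_discordant {A : Finset α} {R T : List α}
    (hR : IsLinOrd A R) (hT : IsLinOrd A T) (h : invCount R T ≠ 0) :
    ∃ l₁ x y l₂, R = l₁ ++ x :: y :: l₂ ∧ T.idxOf y < T.idxOf x := by
  classical
  set r : α → α → Prop := fun u v => T.idxOf u < T.idxOf v with hr
  haveI : IsTrans α r := ⟨fun u v w h1 h2 => h1.trans h2⟩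
  have hchain : ¬ R.Chain' r := by
    intro hc
    apply h
    rw [invCount, Finset.card_eq_zero, Finset.filter_eq_empty_iff]
    rintro ⟨a, b⟩ hm ⟨h1, h2⟩
    dsimp only at h1 h2
    simp only [Finset.mem_product, List.mem_toFinset] at hm
    have := idx_lt_of_pairwise (List.isChain_iff_pairwise.1 hc) hm.1 hm.2 h1
    simp only [hr] at this
    omega
  obtain ⟨l₁, x, y, l₂, hEq, hxy⟩ := not_chain'_decomp R hchain
  refine ⟨l₁, x, y, l₂, hEq, ?_⟩
  have hRnd : (l₁ ++ x :: y :: l₂).Nodup := hEq ▸ hR.1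
  have hne : x ≠ y := (nodup_facts hRnd).1
  have hxT : x ∈ T := by
    rw [← List.mem_toFinset, hT.2, ← hR.2, hEq]; simp
  have hyT : y ∈ T := by
    rw [← List.mem_toFinset, hT.2, ← hR.2, hEq]; simp
  have : T.idxOf x ≠ T.idxOf y := fun hEq2 => hne ((List.idxOf_inj hxT).1 hEq2)
  simp only [hr, not_lt] at hxy
  omega

lemma alike_perm {R R' : List α} (hA : Alike R R') : R.Perm R' := by
  obtain ⟨l₁, l₂, x, y, -, rfl, rfl⟩ := hA
  exact swap_perm l₁ l₂ x y

lemma alike_invCount_step {R R' T : List α} (hA : Alike R R') (hRnd : R.Nodup)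
    (hTnd : T.Nodup) (hTF : T.toFinset = R.toFinset) :
    invCount R T = invCount R' T + 1 ∨ invCount R' T = invCount R T + 1 := by
  obtain ⟨l₁, l₂, x, y, -, rfl, rfl⟩ := hA
  exact invCount_step hRnd hTnd hTF

lemma getLast?_cons_of_ne_nil {a : α} {l : List α} (h : l ≠ []) :
    (a :: l).getLast? = l.getLast? := by
  cases l with
  | nil => exact absurd rfl h
  | cons b m => exact List.getLast?_cons_cons

/-- lower bound: any path has more members than there are discordant pairs -/
lemma invCount_lt_length {A : Finset α} :
    ∀ (Q : List (List α)) (R T : List α), Q.Chain' Alike → (∀ l ∈ Q, IsLinOrd A l) →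
      Q.head? = some R → Q.getLast? = some T → invCount R T < Q.length
  | [], R, T, _, _, hh, _ => by simp at hh
  | [S], R, T, _, _, hh, hl => by
    simp only [List.head?_cons, Option.some.injEq] at hh
    simp only [List.getLast?_singleton, Option.some.injEq] at hl
    subst hh; subst hl
    simp [invCount_self]
  | S :: S' :: Q', R, T, hc, hm, hh, hl => by
    simp only [List.head?_cons, Option.some.injEq] at hh
    subst hh
    rw [List.getLast?_cons_cons] at hl
    obtain ⟨hA, hc'⟩ := List.isChain_cons_cons.1 hc
    have hm' : ∀ l ∈ S' :: Q', IsLinOrd A l := fun l hl' => hm l (List.mem_cons_of_mem _ hl')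
    have IH := invCount_lt_length (S' :: Q') S' T hc' hm' rfl hl
    have hT : IsLinOrd A T := hm' T (List.mem_of_mem_getLast? hl)
    have hS : IsLinOrd A S := hm S (by simp)
    have hstep := alike_invCount_step hA hS.1 hT.1 (hT.2.trans hS.2.symm)
    have hSS' : invCount S' T < (S' :: Q').length := IH
    simp only [List.length_cons] at *
    omega

/-- there is a path from `R` to `T` of length `invCount R T + 1` -/
lemma exists_chain {A : Finset α} (T : List α) (hT : IsLinOrd A T) (R : List α)
    (hR : IsLinOrd A R) :
    ∃ Q : List (List α), IsPath A Q R T ∧ Q.length = invCount R T + 1 := by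
  generalize hn : invCount R T = n
  induction n generalizing R with
  | zero =>
    have hRT : R = T := eq_of_invCount_zero hR hT hn
    subst hRT
    exact ⟨[R], ⟨⟨by simp, by simpa using hR, List.isChain_singleton R⟩, rfl, by simp⟩, by simp [hn]⟩
  | succ n ih =>
    obtain ⟨l₁, x, y, l₂, hEq, hd⟩ := exists_adjacent_discordant hR hT (by omega)
    subst hEq
    have hR' : IsLinOrd A (l₁ ++ y :: x :: l₂) :=
      ⟨swap_nodup hR.1, (swap_toFinset l₁ l₂ x y).trans hR.2⟩
    have hstep : invCount (l₁ ++ x :: y :: l₂) T = invCount (l₁ ++ y :: x :: l₂) T + 1 :=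
      invCount_swap_lt hR.1 hd
    obtain ⟨Q, hQ, hQlen⟩ := ih _ hR' (by omega)
    have hQne : Q ≠ [] := hQ.1.1
    refine ⟨(l₁ ++ x :: y :: l₂) :: Q, ⟨⟨by simp, ?_, ?_⟩, rfl, ?_⟩, ?_⟩
    · intro l hl
      rcases List.mem_cons.1 hl with rfl | hl'
      · exact hR
      · exact hQ.1.2.1 l hl'
    · unfold List.Chain'
      rw [List.isChain_cons]
      refine ⟨?_, hQ.1.2.2⟩
      intro h hh
      rw [hQ.2.1, Option.mem_def, Option.some.injEq] at hh
      subst hh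
      have hxy : x ≠ y := (nodup_facts hR.1).1
      exact ⟨l₁, l₂, x, y, hxy, rfl, rfl⟩
    · rw [getLast?_cons_of_ne_nil hQne]
      exact hQ.2.2
    · simp [hQlen, hn]

lemma destutter'_head? (r : α → α → Prop) [DecidableRel r] :
    ∀ (l : List α) (a : α), (l.destutter' r a).head? = some a
  | [], a => by simp
  | b :: l, a => by
    rw [List.destutter'_cons]
    split
    · rfl
    · exact destutter'_head? r l a

lemma restrictOrd_isLinOrd {A B : Finset α} (hBA : B ⊆ A) {l : List α}
    (hl : IsLinOrd A l) : IsLinOrd B (restrictOrd l B) := by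
  refine ⟨hl.1.filter _, ?_⟩
  ext a
  simp only [restrictOrd, List.mem_toFinset, List.mem_filter, decide_eq_true_eq,
    ← List.mem_toFinset (l := l), hl.2]
  exact ⟨fun h => h.2, fun h => ⟨hBA h, h⟩⟩

lemma alike_restrict {R R' : List α} (hA : Alike R R') (B : Finset α) :
    restrictOrd R B = restrictOrd R' B ∨ Alike (restrictOrd R B) (restrictOrd R' B) := by
  obtain ⟨l₁, l₂, x, y, hxy, rfl, rfl⟩ := hA
  by_cases hx : x ∈ B <;> by_cases hy : y ∈ B
  · right
    exact ⟨l₁.filter (fun a => decide (a ∈ B)), l₂.filter (fun a => decide (a ∈ B)), x, y, hxy,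
      by simp [restrictOrd, List.filter_append, List.filter_cons, hx, hy],
      by simp [restrictOrd, List.filter_append, List.filter_cons, hx, hy]⟩
  all_goals left
  all_goals simp [restrictOrd, List.filter_append, List.filter_cons, hx, hy]

lemma restrictPath_cons_head? (Q : List (List α)) (R : List α) (B : Finset α) :
    (restrictPath (R :: Q) B).head? = some (restrictOrd R B) := by
  rw [restrictPath, List.map_cons, List.destutter_cons']
  exact destutter'_head? _ _ _

lemma restrictPath_cons_ne_nil (Q : List (List α)) (R : List α) (B : Finset α) :
    restrictPath (R :: Q) B ≠ [] := by
  rw [restrictPath, List.map_cons, List.destutter_cons']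
  exact List.destutter'_ne_nil _ _

lemma restrictPath_collapse {Q : List (List α)} {S S' : List α} (B : Finset α)
    (hE : restrictOrd S B = restrictOrd S' B) :
    restrictPath (S :: S' :: Q) B = restrictPath (S' :: Q) B := by
  simp only [restrictPath, List.map_cons]
  rw [hE, List.destutter_cons_cons, if_neg (by simp), List.destutter_cons']

lemma restrictPath_split {Q : List (List α)} {S S' : List α} (B : Finset α)
    (hE : restrictOrd S B ≠ restrictOrd S' B) :
    restrictPath (S :: S' :: Q) B = restrictOrd S B :: restrictPath (S' :: Q) B := by
  simp only [restrictPath, List.map_cons]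
  rw [List.destutter_cons_cons, if_pos (by simp [hE]), List.destutter_cons']

/-- the restriction of a path is a path -/
lemma restrictPath_isPath {A B : Finset α} (hBA : B ⊆ A) :
    ∀ (Q : List (List α)) (R T : List α), IsPath A Q R T →
      IsPath B (restrictPath Q B) (restrictOrd R B) (restrictOrd T B)
  | [], R, T, h => by simp [IsPath] at h
  | [S], R, T, h => by
    obtain ⟨⟨-, hm, -⟩, hh, hl⟩ := h
    simp only [List.head?_cons, Option.some.injEq] at hh
    simp only [List.getLast?_singleton, Option.some.injEq] at hl
    have hS : IsLinOrd B (restrictOrd S B) := restrictOrd_isLinOrd hBA (hm S (by simp))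
    rw [← hh, ← hl]
    have hres : restrictPath [S] B = [restrictOrd S B] := by simp [restrictPath]
    rw [hres]
    exact ⟨⟨by simp, by simpa using hS, List.isChain_singleton _⟩, rfl, by simp⟩
  | S :: S' :: Q', R, T, h => by
    obtain ⟨⟨-, hm, hch⟩, hh, hl⟩ := h
    simp only [List.head?_cons, Option.some.injEq] at hh
    rw [← hh]
    rw [List.getLast?_cons_cons] at hl
    obtain ⟨hA, hch'⟩ := List.isChain_cons_cons.1 hch
    have hpath' : IsPath A (S' :: Q') S' T :=
      ⟨⟨by simp, fun l hl' => hm l (List.mem_cons_of_mem _ hl'), hch'⟩, rfl, hl⟩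
    have IH := restrictPath_isPath hBA (S' :: Q') S' T hpath'
    by_cases hE : restrictOrd S B = restrictOrd S' B
    · rw [restrictPath_collapse B hE, hE]
      exact IH
    · rw [restrictPath_split B hE]
      obtain ⟨⟨hne', hmem', hch2⟩, hh', hl'⟩ := IH
      refine ⟨⟨by simp, ?_, ?_⟩, rfl, ?_⟩
      · intro l hl2
        rcases List.mem_cons.1 hl2 with rfl | hl3
        · exact restrictOrd_isLinOrd hBA (hm S (by simp))
        · exact hmem' l hl3
      · unfold List.Chain'
        rw [List.isChain_cons]
        refine ⟨?_, hch2⟩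
        intro u hu
        rw [hh', Option.mem_def, Option.some.injEq] at hu
        subst hu
        rcases alike_restrict hA B with hEq | hAl
        · exact absurd hEq hE
        · exact hAl
      · rw [getLast?_cons_of_ne_nil hne']
        exact hl'

/-- key upper bound: the restriction of a tight (geodesic-length) path is short -/
lemma restrict_length_le {A B : Finset α} (hBA : B ⊆ A) :
    ∀ (Q : List (List α)) (R T : List α), Q.Chain' Alike → (∀ l ∈ Q, IsLinOrd A l) →
      Q.head? = some R → Q.getLast? = some T → Q.length = invCount R T + 1 →
      (restrictPath Q B).length ≤ invCount (restrictOrd R B) (restrictOrd T B) + 1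
  | [], R, T, _, _, hh, _, _ => by simp at hh
  | [S], R, T, _, _, hh, hl, _ => by
    simp only [List.head?_cons, Option.some.injEq] at hh
    rw [← hh]
    have : restrictPath [S] B = [restrictOrd S B] := by simp [restrictPath]
    rw [this]
    exact Nat.succ_le_succ (Nat.zero_le _)
  | S :: S' :: Q', R, T, hch, hm, hh, hl, hlen => by
    simp only [List.head?_cons, Option.some.injEq] at hh
    rw [← hh]
    rw [← hh] at hlen
    rw [List.getLast?_cons_cons] at hl
    obtain ⟨hA, hch'⟩ := List.isChain_cons_cons.1 hch
    have hm' : ∀ l ∈ S' :: Q', IsLinOrd A l := fun l h2 => hm l (List.mem_cons_of_mem _ h2)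
    have hT : IsLinOrd A T := hm' T (List.mem_of_mem_getLast? hl)
    have hS : IsLinOrd A S := hm S (by simp)
    have hlow : invCount S' T < (S' :: Q').length :=
      invCount_lt_length (S' :: Q') S' T hch' hm' rfl hl
    have hstep := alike_invCount_step hA hS.1 hT.1 (hT.2.trans hS.2.symm)
    have hdec : invCount S T = invCount S' T + 1 := by
      simp only [List.length_cons] at hlen hlow
      omega
    have hlen' : (S' :: Q').length = invCount S' T + 1 := by
      simp only [List.length_cons] at hlen ⊢
      omega
    have IH := restrict_length_le hBA (S' :: Q') S' T hch' hm' rfl hl hlen'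
    obtain ⟨l₁, l₂, x, y, hxy, hSeq, hS'eq⟩ := hA
    have hSnd : (l₁ ++ x :: y :: l₂).Nodup := hSeq ▸ hS.1
    have hxT : x ∈ T := by
      rw [← List.mem_toFinset, hT.2, ← hS.2, hSeq]; simp
    have hyT : y ∈ T := by
      rw [← List.mem_toFinset, hT.2, ← hS.2, hSeq]; simp
    have hd : T.idxOf y < T.idxOf x := by
      have hne : T.idxOf x ≠ T.idxOf y :=
        fun hEq => hxy ((List.idxOf_inj hxT).1 hEq)
      rcases lt_or_gt_of_ne hne with hlt | hgt
      · exfalso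
        have := invCount_swap_lt (swap_nodup hSnd) hlt
        rw [← hSeq, ← hS'eq] at this
        omega
      · exact hgt
    by_cases hB : x ∈ B ∧ y ∈ B
    · have hsplitS : restrictOrd S B =
          (l₁.filter fun a => decide (a ∈ B)) ++ x :: y :: (l₂.filter fun a => decide (a ∈ B)) := by
        simp [restrictOrd, hSeq, List.filter_append, List.filter_cons, hB.1, hB.2]
      have hsplitS' : restrictOrd S' B =
          (l₁.filter fun a => decide (a ∈ B)) ++ y :: x :: (l₂.filter fun a => decide (a ∈ B)) := by
        simp [restrictOrd, hS'eq, List.filter_append, List.filter_cons, hB.1, hB.2]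
      have hEne : restrictOrd S B ≠ restrictOrd S' B := by
        rw [hsplitS, hsplitS']
        intro hEq
        have := List.append_cancel_left hEq
        simp only [List.cons.injEq] at this
        exact hxy this.1
      rw [restrictPath_split B hEne, List.length_cons]
      have hdB : (restrictOrd T B).idxOf y < (restrictOrd T B).idxOf x := by
        refine sublist_idx_lt (List.filter_sublist (l := T)) hT.1 ?_ ?_ hd
        · exact List.mem_filter.2 ⟨hyT, by simp [hB.2]⟩
        · exact List.mem_filter.2 ⟨hxT, by simp [hB.1]⟩
      have hndB : ((l₁.filter fun a => decide (a ∈ B)) ++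
          x :: y :: (l₂.filter fun a => decide (a ∈ B))).Nodup := by
        rw [← hsplitS]
        exact hS.1.filter _
      have hinvB : invCount (restrictOrd S B) (restrictOrd T B) =
          invCount (restrictOrd S' B) (restrictOrd T B) + 1 := by
        rw [hsplitS, hsplitS']
        exact invCount_swap_lt hndB hdB
      omega
    · have hEq : restrictOrd S B = restrictOrd S' B := by
        by_cases hx : x ∈ B <;> by_cases hy : y ∈ B <;>
          simp [restrictOrd, hSeq, hS'eq, List.filter_append, List.filter_cons, hx, hy] <;>
          exact absurd ⟨hx, hy⟩ hB
      rw [restrictPath_collapse B hEq, hEq]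
      exact IH

end CondorcetAux

/-- The restriction of a geodesic on `L(A)` to a subset `B ⊆ A`
is a geodesic on `L(B)`. -/
theorem restrictPath_isGeodesic [DecidableEq α] (A B : Finset α) (hBA : B ⊆ A)
    (P : List (List α)) (R T : List α) (hP : IsGeodesic A P R T) :
    IsGeodesic B (restrictPath P B) (restrictOrd R B) (restrictOrd T B) := by
  obtain ⟨hpath, hmin⟩ := hP
  obtain ⟨⟨hne, hm, hch⟩, hh, hl⟩ := hpath
  have hR : IsLinOrd A R := hm R (List.mem_of_mem_head? (Option.mem_def.2 hh))
  have hT : IsLinOrd A T := hm T (List.mem_of_mem_getLast? hl)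
  have hlow : CondorcetAux.invCount R T < P.length :=
    CondorcetAux.invCount_lt_length P R T hch hm hh hl
  obtain ⟨Q₀, hQ₀, hQ₀len⟩ := CondorcetAux.exists_chain T hT R hR
  have hPlen : P.length = CondorcetAux.invCount R T + 1 :=
    Nat.le_antisymm (hQ₀len ▸ hmin Q₀ hQ₀) hlow
  constructor
  · exact CondorcetAux.restrictPath_isPath hBA P R T ⟨⟨hne, hm, hch⟩, hh, hl⟩
  · intro Q hQ
    have h1 := CondorcetAux.restrict_length_le hBA P R T hch hm hh hl hPlen
    obtain ⟨⟨hneQ, hmQ, hchQ⟩, hhQ, hlQ⟩ := hQ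
    have h2 := CondorcetAux.invCount_lt_length Q _ _ hchQ hmQ hhQ hlQ
    omega
end

section
/- Let D ⊆ L(A) be a peak-pit Condorcet domain, let a, b, c ∈ A be distinct, and let R, T ∈ D_{{a,b,c}} be linear orders that differ by three swaps of adjacent alternatives (that is, T is the reverse of R). Then there are exactly two geodesics on L({a,b,c}) connecting R and T, and for at least one of these two geodesics 𝒜, the set D_{{a,b,c}} ∪ K(𝒜) is a peak-pit Condorcet domain. -/
/-!
Common definitions for formalizing Condorcet domains.

A linear order on a finite set `A : Finset α` of alternatives is encoded as a
duplicate-free list enumerating the elements of `A` from most preferred (head)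
to least preferred (last).
-/

variable {α : Type*}

section Helpers

variable {α : Type*}

lemma alike_iff' {p q r : α} {S : List α} :
    Alike [p, q, r] S ↔ (p ≠ q ∧ S = [q, p, r]) ∨ (q ≠ r ∧ S = [p, r, q]) := by
  constructor
  · rintro ⟨l₁, l₂, u, v, huv, h1, h2⟩
    match l₁ with
    | [] =>
      simp only [List.nil_append, List.cons.injEq] at h1 h2
      obtain ⟨rfl, rfl, rfl⟩ := h1
      left; exact ⟨huv, by simpa using h2⟩
    | [w] =>
      simp only [List.cons_append, List.nil_append, List.cons.injEq] at h1 h2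
      obtain ⟨rfl, rfl, rfl, rfl⟩ := h1
      right; exact ⟨huv, by simpa using h2⟩
    | w :: w' :: l =>
      exfalso
      have := congrArg List.length h1
      simp at this; omega
  · rintro (⟨h, rfl⟩ | ⟨h, rfl⟩)
    · exact ⟨[], [r], p, q, h, rfl, rfl⟩
    · exact ⟨[p], [], q, r, h, rfl, rfl⟩

lemma alike_symm' {R T : List α} (h : Alike R T) : Alike T R := by
  obtain ⟨l₁, l₂, x, y, hxy, h1, h2⟩ := h
  exact ⟨l₁, l₂, y, x, hxy.symm, h2, h1⟩

lemma path_classify [DecidableEq α] {x y z : α} (hxy : x ≠ y) (hxz : x ≠ z) (hyz : y ≠ z)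
    {A : Finset α} {Q : List (List α)} (hQ : IsPath A Q [x,y,z] [z,y,x]) :
    4 ≤ Q.length ∧ (Q.length ≤ 4 →
      Q = [[x,y,z],[y,x,z],[y,z,x],[z,y,x]] ∨ Q = [[x,y,z],[x,z,y],[z,x,y],[z,y,x]]) := by
  obtain ⟨⟨hne, hlin, hchain⟩, hhead, hlast⟩ := hQ
  match Q with
  | [] => simp at hhead
  | [q0] =>
    exfalso
    simp only [List.head?_cons, Option.some.injEq] at hhead
    simp only [List.getLast?_singleton, Option.some.injEq] at hlast
    rw [hhead] at hlast
    simp [List.cons.injEq] at hlast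
    exact hxz hlast.1
  | [q0, q1] =>
    exfalso
    simp only [List.head?_cons, Option.some.injEq] at hhead
    have hlast' : q1 = [z,y,x] := by simpa [List.getLast?] using hlast
    subst hhead hlast'
    have h01 : Alike [x,y,z] [z,y,x] := (List.isChain_cons_cons.mp hchain).1
    rcases alike_iff'.mp h01 with ⟨_, h⟩ | ⟨_, h⟩ <;> simp [List.cons.injEq] at h
    · exact hyz h.1.symm
    · exact hxz h.1.symm
  | [q0, q1, q2] =>
    exfalso
    simp only [List.head?_cons, Option.some.injEq] at hhead
    have hlast' : q2 = [z,y,x] := by simpa [List.getLast?] using hlast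
    subst hhead hlast'
    simp only [List.Chain', List.isChain_cons_cons, List.isChain_singleton, and_true] at hchain
    obtain ⟨h01, h12⟩ := hchain
    rcases alike_iff'.mp h01 with ⟨-, rfl⟩ | ⟨-, rfl⟩ <;>
      rcases alike_iff'.mp h12 with ⟨-, h⟩ | ⟨-, h⟩ <;> simp [List.cons.injEq] at h <;> tauto
  | q0 :: q1 :: q2 :: q3 :: rest =>
    refine ⟨by simp only [List.length_cons]; omega, fun hlen => ?_⟩
    have hrest : rest = [] := List.length_eq_zero_iff.mp (by simp only [List.length_cons] at hlen; omega)
    subst hrest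
    simp only [List.head?_cons, Option.some.injEq] at hhead
    have hlast' : q3 = [z,y,x] := by simpa [List.getLast?] using hlast
    subst hhead hlast'
    simp only [List.Chain', List.isChain_cons_cons, List.isChain_singleton, and_true] at hchain
    obtain ⟨h01, h12, h23⟩ := hchain
    have h32 := alike_symm' h23
    rcases alike_iff'.mp h01 with ⟨-, rfl⟩ | ⟨-, rfl⟩ <;>
      rcases alike_iff'.mp h32 with ⟨-, h2⟩ | ⟨-, h2⟩ <;>
        rcases alike_iff'.mp h12 with ⟨-, h⟩ | ⟨-, h⟩ <;>
          rw [h] at h2 <;> simp only [List.cons.injEq, and_true] at h2 <;>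
            first
              | (exfalso; tauto)
              | (left; rw [h]; done)
              | (right; rw [h]; done)

lemma restrict_linOrd [DecidableEq α] {A S : Finset α} {l : List α}
    (h : IsLinOrd A l) (hS : S ⊆ A) : IsLinOrd S (restrictOrd l S) := by
  refine ⟨h.1.filter _, ?_⟩
  ext w
  simp only [restrictOrd, List.toFinset_filter, Finset.mem_filter, List.mem_toFinset,
    decide_eq_true_eq, h.2]
  constructor
  · rintro ⟨-, hw⟩; exact hw
  · intro hw; exact ⟨hS hw, hw⟩

lemma restrict_self [DecidableEq α] {S : Finset α} {l : List α}
    (h : IsLinOrd S l) : restrictOrd l S = l := by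
  apply List.filter_eq_self.mpr
  intro w hw
  simp only [decide_eq_true_eq]
  rw [← h.2]
  exact List.mem_toFinset.mpr hw

lemma linOrd_perm [DecidableEq α] {x y z a b c : α}
    (hxy : x ≠ y) (hxz : x ≠ z) (hyz : y ≠ z)
    (hiff : ∀ w, (w = x ∨ w = y ∨ w = z) ↔ (w = a ∨ w = b ∨ w = c)) :
    IsLinOrd {a, b, c} [x, y, z] := by
  refine ⟨by simp [hxy, hxz, hyz], ?_⟩
  ext w
  simp only [List.toFinset_cons, List.toFinset_nil, insert_empty_eq, Finset.mem_insert,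
    Finset.mem_singleton]
  exact hiff w

end Helpers

/-- Let `D ⊆ L(A)` be a peak-pit Condorcet domain, `a,b,c ∈ A`
distinct, and `R, T ∈ D_{{a,b,c}}` differ by three swaps of adjacent
alternatives (i.e. `T` is the reverse of `R`).  Then there are exactly two
geodesics on `L({a,b,c})` connecting `R` and `T`, and for at least one of them,
`𝒜`, the domain `D_{{a,b,c}} ∪ K(𝒜)` is a peak-pit Condorcet domain. -/
theorem two_geodesics_on_triple [DecidableEq α] (A : Finset α)
    (D : Set (List α)) (hD : IsPeakPitDomain A D) (a b c : α)
    (ha : a ∈ A) (hb : b ∈ A) (hc : c ∈ A)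
    (hab : a ≠ b) (hac : a ≠ c) (hbc : b ≠ c)
    (R T : List α) (hR : R ∈ restrictDom D {a, b, c})
    (hT : T ∈ restrictDom D {a, b, c}) (hrev : T = R.reverse) :
    ∃ P₁ P₂ : List (List α), P₁ ≠ P₂ ∧
      IsGeodesic {a, b, c} P₁ R T ∧ IsGeodesic {a, b, c} P₂ R T ∧
      (∀ Q : List (List α), IsGeodesic {a, b, c} Q R T → Q = P₁ ∨ Q = P₂) ∧
      (IsPeakPitDomain {a, b, c} (restrictDom D {a, b, c} ∪ {l | l ∈ P₁}) ∨
        IsPeakPitDomain {a, b, c} (restrictDom D {a, b, c} ∪ {l | l ∈ P₂})) := by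
  have hsub : ({a, b, c} : Finset α) ⊆ A := by
    intro w hw
    simp only [Finset.mem_insert, Finset.mem_singleton] at hw
    rcases hw with rfl | rfl | rfl <;> assumption
  have hElin : ∀ l ∈ restrictDom D {a, b, c}, IsLinOrd {a, b, c} l := by
    rintro l ⟨l₀, hl₀, rfl⟩
    exact restrict_linOrd (hD.1 l₀ hl₀) hsub
  have hRlin := hElin R hR
  have hcard : ({a, b, c} : Finset α).card = 3 := by
    rw [Finset.card_insert_of_notMem (by simp [hab, hac]),
      Finset.card_insert_of_notMem (by simp [hbc]), Finset.card_singleton]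
  have hRlen : R.length = 3 := by
    rw [← List.toFinset_card_of_nodup hRlin.1, hRlin.2, hcard]
  obtain ⟨x, y, z, rfl⟩ := List.length_eq_three.mp hRlen
  have hnodup := hRlin.1
  have hxy : x ≠ y := fun h => by simp [h] at hnodup
  have hxz : x ≠ z := fun h => by simp [h] at hnodup
  have hyz : y ≠ z := fun h => by simp [h] at hnodup
  have hv0 : ((0 : Fin 3) : ℕ) = 0 := rfl
  have hv2 : ((2 : Fin 3) : ℕ) = 2 := rfl
  have hiff : ∀ w, (w = x ∨ w = y ∨ w = z) ↔ (w = a ∨ w = b ∨ w = c) := by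
    intro w
    have := Finset.ext_iff.mp hRlin.2 w
    simpa using this
  obtain rfl : T = [z, y, x] := by rw [hrev]; rfl
  have lo1 : IsLinOrd {a, b, c} [y, x, z] :=
    linOrd_perm hxy.symm hyz hxz (fun w => by rw [← hiff w]; tauto)
  have lo2 : IsLinOrd {a, b, c} [y, z, x] :=
    linOrd_perm hyz hxy.symm hxz.symm (fun w => by rw [← hiff w]; tauto)
  have lo3 : IsLinOrd {a, b, c} [z, y, x] :=
    linOrd_perm hyz.symm hxz.symm hxy.symm (fun w => by rw [← hiff w]; tauto)
  have lo4 : IsLinOrd {a, b, c} [x, z, y] :=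
    linOrd_perm hxz hxy hyz.symm (fun w => by rw [← hiff w]; tauto)
  have lo5 : IsLinOrd {a, b, c} [z, x, y] :=
    linOrd_perm hxz.symm hyz.symm hxy (fun w => by rw [← hiff w]; tauto)
  have a1 : Alike [x, y, z] [y, x, z] := ⟨[], [z], x, y, hxy, rfl, rfl⟩
  have a2 : Alike [y, x, z] [y, z, x] := ⟨[y], [], x, z, hxz, rfl, rfl⟩
  have a3 : Alike [y, z, x] [z, y, x] := ⟨[], [x], y, z, hyz, rfl, rfl⟩
  have b1 : Alike [x, y, z] [x, z, y] := ⟨[x], [], y, z, hyz, rfl, rfl⟩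
  have b2 : Alike [x, z, y] [z, x, y] := ⟨[], [y], x, z, hxz, rfl, rfl⟩
  have b3 : Alike [z, x, y] [z, y, x] := ⟨[z], [], x, y, hxy, rfl, rfl⟩
  have hP1path : IsPath {a, b, c} [[x,y,z],[y,x,z],[y,z,x],[z,y,x]] [x,y,z] [z,y,x] := by
    refine ⟨⟨by simp, ?_, ?_⟩, rfl, rfl⟩
    · intro l hl
      simp only [List.mem_cons, List.not_mem_nil, or_false] at hl
      rcases hl with rfl | rfl | rfl | rfl
      exacts [hRlin, lo1, lo2, lo3]
    · simp only [List.Chain', List.isChain_cons_cons, List.isChain_singleton, and_true]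
      exact ⟨a1, a2, a3⟩
  have hP2path : IsPath {a, b, c} [[x,y,z],[x,z,y],[z,x,y],[z,y,x]] [x,y,z] [z,y,x] := by
    refine ⟨⟨by simp, ?_, ?_⟩, rfl, rfl⟩
    · intro l hl
      simp only [List.mem_cons, List.not_mem_nil, or_false] at hl
      rcases hl with rfl | rfl | rfl | rfl
      exacts [hRlin, lo4, lo5, lo3]
    · simp only [List.Chain', List.isChain_cons_cons, List.isChain_singleton, and_true]
      exact ⟨b1, b2, b3⟩
  have hP1geo : IsGeodesic {a, b, c} [[x,y,z],[y,x,z],[y,z,x],[z,y,x]] [x,y,z] [z,y,x] :=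
    ⟨hP1path, fun Q hQ => by simpa using (path_classify hxy hxz hyz hQ).1⟩
  have hP2geo : IsGeodesic {a, b, c} [[x,y,z],[x,z,y],[z,x,y],[z,y,x]] [x,y,z] [z,y,x] :=
    ⟨hP2path, fun Q hQ => by simpa using (path_classify hxy hxz hyz hQ).1⟩
  refine ⟨_, _, ?_, hP1geo, hP2geo, ?_, ?_⟩
  · intro h
    simp only [List.cons.injEq] at h
    exact hxy h.2.1.1.symm
  · intro Q hQ
    have hle : Q.length ≤ 4 := by simpa using hQ.2 _ hP1path
    exact (path_classify hxy hxz hyz hQ.1).2 hle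
  · -- peak-pit part
    obtain ⟨x₀, hx₀mem, hx₀⟩ := hD.2 a b c ha hb hc hab hac hbc
    have hx₀mem' : x₀ = x ∨ x₀ = y ∨ x₀ = z := (hiff x₀).mpr (by simpa using hx₀mem)
    have hymem : y ∈ ({a, b, c} : Finset α) := by
      have := (hiff y).mp (Or.inr (Or.inl rfl))
      simp only [Finset.mem_insert, Finset.mem_singleton]
      exact this
    rcases hx₀ with hnt | hnb
    · -- never-top: x₀ = y, use P₂
      have h1 := hnt _ hR
      have h2 := hnt _ hT
      simp only [hv0, List.getElem?_cons_zero, ne_eq, Option.some.injEq] at h1 h2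
      have hx₀y : x₀ = y := by rcases hx₀mem' with rfl | rfl | rfl <;> tauto
      have hnt' : NeverCond (restrictDom D {a, b, c}) y 0 := hx₀y ▸ hnt
      right
      have hUlin : ∀ l ∈ restrictDom D {a, b, c} ∪
          {l | l ∈ [[x,y,z],[x,z,y],[z,x,y],[z,y,x]]}, IsLinOrd {a, b, c} l := by
        rintro l (hl | hl)
        · exact hElin l hl
        · simp only [Set.mem_setOf_eq, List.mem_cons, List.not_mem_nil, or_false] at hl
          rcases hl with rfl | rfl | rfl | rfl
          exacts [hRlin, lo4, lo5, lo3]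
      refine ⟨hUlin, ?_⟩
      intro a' b' c' ha' hb' hc' hab' hac' hbc'
      have hset : ({a', b', c'} : Finset α) = {a, b, c} := by
        apply Finset.eq_of_subset_of_card_le
        · intro w hw
          simp only [Finset.mem_insert, Finset.mem_singleton] at hw
          rcases hw with rfl | rfl | rfl <;> assumption
        · rw [hcard, Finset.card_insert_of_notMem (by simp [hab', hac']),
            Finset.card_insert_of_notMem (by simp [hbc']), Finset.card_singleton]
      rw [hset]
      refine ⟨y, hymem, Or.inl ?_⟩
      rintro l' ⟨l, hl, rfl⟩
      simp only [restrict_self (hUlin l hl)]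
      rcases hl with hl | hl
      · exact hnt' l hl
      · simp only [Set.mem_setOf_eq, List.mem_cons, List.not_mem_nil, or_false] at hl
        rcases hl with rfl | rfl | rfl | rfl <;>
          simp only [hv0, List.getElem?_cons_zero, ne_eq, Option.some.injEq]
        exacts [hxy, hxy, fun h => hyz h.symm, fun h => hyz h.symm]
    · -- never-bottom: x₀ = y, use P₁
      have h1 := hnb _ hR
      have h2 := hnb _ hT
      simp only [hv2, List.getElem?_cons_succ, List.getElem?_cons_zero, ne_eq,
        Option.some.injEq] at h1 h2
      have hx₀y : x₀ = y := by rcases hx₀mem' with rfl | rfl | rfl <;> tauto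
      have hnb' : NeverCond (restrictDom D {a, b, c}) y 2 := hx₀y ▸ hnb
      left
      have hUlin : ∀ l ∈ restrictDom D {a, b, c} ∪
          {l | l ∈ [[x,y,z],[y,x,z],[y,z,x],[z,y,x]]}, IsLinOrd {a, b, c} l := by
        rintro l (hl | hl)
        · exact hElin l hl
        · simp only [Set.mem_setOf_eq, List.mem_cons, List.not_mem_nil, or_false] at hl
          rcases hl with rfl | rfl | rfl | rfl
          exacts [hRlin, lo1, lo2, lo3]
      refine ⟨hUlin, ?_⟩
      intro a' b' c' ha' hb' hc' hab' hac' hbc'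
      have hset : ({a', b', c'} : Finset α) = {a, b, c} := by
        apply Finset.eq_of_subset_of_card_le
        · intro w hw
          simp only [Finset.mem_insert, Finset.mem_singleton] at hw
          rcases hw with rfl | rfl | rfl <;> assumption
        · rw [hcard, Finset.card_insert_of_notMem (by simp [hab', hac']),
            Finset.card_insert_of_notMem (by simp [hbc']), Finset.card_singleton]
      rw [hset]
      refine ⟨y, hymem, Or.inr ?_⟩
      rintro l' ⟨l, hl, rfl⟩
      simp only [restrict_self (hUlin l hl)]
      rcases hl with hl | hl
      · exact hnb' l hl
      · simp only [Set.mem_setOf_eq, List.mem_cons, List.not_mem_nil, or_false] at hl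
        rcases hl with rfl | rfl | rfl | rfl <;>
          simp only [hv2, List.getElem?_cons_succ, List.getElem?_cons_zero, ne_eq,
            Option.some.injEq]
        exacts [fun h => hyz h.symm, fun h => hyz h.symm, hxy, hxy]
end
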